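/- arXiv:0810.1931 — 5 statements merged into one kernel-verified Lean document; each statement's English description precedes it below -/
import Mathlib

section
/- For all integers n ≥ 0, c_2(3n + 2) ≡ 0 (mod 3), where c_2(n) is defined by ∑_{n≥0} c_2(n) q^n = ∏_{n≥1} 1/((1-q^n)(1-q^{2n})). -/
open PowerSeries Finset
open PowerSeries Finset

noncomputable section ChanAux

abbrev PS := PowerSeries ℤ

/-- `Ee n = ∏_{m=1}^n (1 - X^{2m})`. -/
def Ee (n : ℕ) : PS := ∏ m ∈ Icc 1 n, (1 - (X:PS) ^ (2*m))

/-- `Oo n = ∏_{m=1}^n (1 - X^{2m-1})`. -/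
def Oo (n : ℕ) : PS := ∏ m ∈ Icc 1 n, (1 - (X:PS) ^ (2*m-1))

/-- `PA n = ∏_{m=1}^n (1 - X^m)`. -/
def PA (n : ℕ) : PS := ∏ m ∈ Icc 1 n, (1 - (X:PS) ^ m)

lemma Ee_zero : Ee 0 = 1 := by simp [Ee]

lemma Ee_succ (n : ℕ) : Ee (n+1) = Ee n * (1 - X ^ (2*(n+1))) := by
  rw [Ee, Ee, Finset.prod_Icc_succ_top (by omega)]

lemma Oo_succ (n : ℕ) : Oo (n+1) = Oo n * (1 - X ^ (2*n+1)) := by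
  rw [Oo, Oo, Finset.prod_Icc_succ_top (by omega)]
  have h : 2*(n+1)-1 = 2*n+1 := by omega
  rw [h]

lemma PA_interleave (n : ℕ) : PA (2*n) = Oo n * Ee n := by
  induction n with
  | zero => simp [PA, Oo, Ee]
  | succ n ih =>
      have h2 : 2*(n+1) = (2*n+1) + 1 := by ring
      rw [h2, PA, Finset.prod_Icc_succ_top (by omega),
        Finset.prod_Icc_succ_top (by omega), ← PA, ih, Oo_succ, Ee_succ]
      ring_nf

lemma constCoeff_Ee (n : ℕ) : constantCoeff (Ee n) = 1 := by
  rw [Ee, map_prod]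
  apply Finset.prod_eq_one
  intro m hm
  simp only [Finset.mem_Icc] at hm
  rw [map_sub, map_one, map_pow, constantCoeff_X]
  rw [zero_pow (by omega)]
  ring

lemma isUnit_Ee (n : ℕ) : IsUnit (Ee n) :=
  PowerSeries.isUnit_iff_constantCoeff.mpr (by rw [constCoeff_Ee]; exact isUnit_one)

/-- `Ee n` as a unit. -/
def EeU (n : ℕ) : (PS)ˣ := (isUnit_Ee n).unit

lemma EeU_val (n : ℕ) : ((EeU n : (PS)ˣ) : PS) = Ee n := rfl

lemma EeU_zero : EeU 0 = 1 := by
  ext; rw [EeU_val, Ee_zero, Units.val_one]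

/-- Gaussian binomial coefficient (in `q²`) as a power series. -/
def gb (m : ℕ) (k : ℤ) : PS :=
  if 0 ≤ k ∧ k ≤ m then ((EeU m) * (EeU k.toNat)⁻¹ * (EeU (m - k.toNat))⁻¹ : (PS)ˣ) else 0

lemma gb_of_neg {m : ℕ} {k : ℤ} (h : k < 0) : gb m k = 0 := by
  rw [gb, if_neg]; omega

lemma gb_of_gt {m : ℕ} {k : ℤ} (h : (m:ℤ) < k) : gb m k = 0 := by
  rw [gb, if_neg]; omega

lemma gb_zero (m : ℕ) : gb m 0 = 1 := by
  rw [gb, if_pos ⟨le_refl 0, by exact_mod_cast Nat.zero_le m⟩]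
  simp [EeU_zero]

lemma gb_self (m : ℕ) : gb m m = 1 := by
  rw [gb, if_pos ⟨by positivity, le_refl _⟩]
  simp [EeU_zero]

lemma GB1 {m : ℕ} {k : ℤ} (h0 : 0 ≤ k) (h1 : k ≤ m) :
    gb m k * Ee k.toNat * Ee (m - k.toNat) = Ee m := by
  rw [gb, if_pos ⟨h0, h1⟩, ← EeU_val k.toNat, ← EeU_val (m - k.toNat), ← EeU_val m,
    ← Units.val_mul, ← Units.val_mul]
  congr 1
  have : EeU m * (EeU k.toNat)⁻¹ * (EeU (m - k.toNat))⁻¹ * EeU k.toNat * EeU (m - k.toNat)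
      = EeU m * ((EeU k.toNat)⁻¹ * EeU k.toNat) * ((EeU (m - k.toNat))⁻¹ * EeU (m - k.toNat)) := by
    ac_rfl
  rw [this, inv_mul_cancel, inv_mul_cancel, mul_one, mul_one]



lemma Ee_ne_zero (n : ℕ) : Ee n ≠ 0 := (isUnit_Ee n).ne_zero

/-- Pascal recurrence I. -/
lemma P1 (m : ℕ) (k : ℤ) :
    gb (m+1) k = gb m k + X ^ (2*((m:ℤ)+1-k)).toNat * gb m (k-1) := by
  rcases lt_or_ge k 0 with h | h
  · rw [gb_of_neg h, gb_of_neg h, gb_of_neg (by omega), mul_zero, add_zero]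
  rcases eq_or_lt_of_le h with h0 | h0
  · rw [← h0, gb_zero, gb_zero, gb_of_neg (by omega), mul_zero, add_zero]
  rcases lt_trichotomy k ((m:ℤ)+1) with hlt | heq | hgt
  · -- main case : 1 ≤ k ≤ m
    obtain ⟨a, rfl⟩ : ∃ a : ℕ, k = (a:ℤ) := ⟨k.toNat, by omega⟩
    have ha1 : 1 ≤ a := by exact_mod_cast h0
    have ham : a ≤ m := by omega
    have H1 : gb (m+1) (a:ℤ) * Ee a * Ee (m+1-a) = Ee (m+1) := by
      have := GB1 (m := m+1) (k := (a:ℤ)) (by positivity) (by exact_mod_cast Nat.le_succ_of_le ham)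
      simpa using this
    have H2 : gb m (a:ℤ) * Ee a * Ee (m-a) = Ee m := by
      have := GB1 (m := m) (k := (a:ℤ)) (by positivity) (by exact_mod_cast ham)
      simpa using this
    have H3 : gb m ((a:ℤ)-1) * Ee (a-1) * Ee (m+1-a) = Ee m := by
      have := GB1 (m := m) (k := (a:ℤ)-1) (by omega) (by omega)
      rw [show ((a:ℤ)-1).toNat = a-1 by omega, show m - (a-1) = m+1-a by omega] at this
      exact this
    have H4 : Ee (m+1-a) = Ee (m-a) * (1 - X^(2*(m+1-a))) := by
      have := Ee_succ (m-a)
      rw [show m-a+1 = m+1-a by omega] at this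
      exact this
    have H5 : Ee a = Ee (a-1) * (1 - X^(2*a)) := by
      have := Ee_succ (a-1)
      rw [show a-1+1 = a by omega] at this
      exact this
    have H6 : Ee (m+1) = Ee m * (1 - X^(2*(m+1))) := Ee_succ m
    have H7 : (X:PS)^(2*(m+1-a)) * X^(2*a) = X^(2*(m+1)) := by
      rw [← pow_add]; congr 1; omega
    rw [show (2*((m:ℤ)+1-(a:ℤ))).toNat = 2*(m+1-a) by omega]
    apply mul_right_cancel₀ (mul_ne_zero (Ee_ne_zero a) (Ee_ne_zero (m+1-a)))
    linear_combination H1 - gb m (a:ℤ) * Ee a * H4 - (1 - X^(2*(m+1-a))) * H2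
      - X^(2*(m+1-a)) * gb m ((a:ℤ)-1) * Ee (m+1-a) * H5
      - X^(2*(m+1-a)) * (1 - X^(2*a)) * H3 + H6 + Ee m * H7
  · -- k = m+1
    subst heq
    have e1 : gb (m+1) ((m:ℤ)+1) = 1 := by
      have := gb_self (m+1); push_cast at this; exact this
    have e2 : gb m ((m:ℤ)+1) = 0 := gb_of_gt (by omega)
    have e3 : gb m ((m:ℤ)+1-1) = 1 := by
      rw [show (m:ℤ)+1-1 = ((m:ℕ):ℤ) by ring]; exact gb_self m
    rw [e1, e2, e3, show (2*((m:ℤ)+1-((m:ℤ)+1))).toNat = 0 by omega]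
    ring
  · rw [gb_of_gt (m := m+1) (by push_cast; omega), gb_of_gt (m := m) (k := k) (by omega),
      gb_of_gt (m := m) (k := k-1) (by omega), mul_zero, add_zero]

/-- Pascal recurrence II. -/
lemma P2 (m : ℕ) (k : ℤ) :
    gb (m+1) k = X ^ (2*k).toNat * gb m k + gb m (k-1) := by
  rcases lt_or_ge k 0 with h | h
  · rw [gb_of_neg h, gb_of_neg h, gb_of_neg (by omega), mul_zero, zero_add]
  rcases eq_or_lt_of_le h with h0 | h0
  · rw [← h0, gb_zero, gb_zero, gb_of_neg (by omega)]; norm_num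
  rcases lt_trichotomy k ((m:ℤ)+1) with hlt | heq | hgt
  · -- main case : 1 ≤ k ≤ m
    obtain ⟨a, rfl⟩ : ∃ a : ℕ, k = (a:ℤ) := ⟨k.toNat, by omega⟩
    have ha1 : 1 ≤ a := by exact_mod_cast h0
    have ham : a ≤ m := by omega
    have H1 : gb (m+1) (a:ℤ) * Ee a * Ee (m+1-a) = Ee (m+1) := by
      have := GB1 (m := m+1) (k := (a:ℤ)) (by positivity) (by exact_mod_cast Nat.le_succ_of_le ham)
      simpa using this
    have H2 : gb m (a:ℤ) * Ee a * Ee (m-a) = Ee m := by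
      have := GB1 (m := m) (k := (a:ℤ)) (by positivity) (by exact_mod_cast ham)
      simpa using this
    have H3 : gb m ((a:ℤ)-1) * Ee (a-1) * Ee (m+1-a) = Ee m := by
      have := GB1 (m := m) (k := (a:ℤ)-1) (by omega) (by omega)
      rw [show ((a:ℤ)-1).toNat = a-1 by omega, show m - (a-1) = m+1-a by omega] at this
      exact this
    have H4 : Ee (m+1-a) = Ee (m-a) * (1 - X^(2*(m+1-a))) := by
      have := Ee_succ (m-a)
      rw [show m-a+1 = m+1-a by omega] at this
      exact this
    have H5 : Ee a = Ee (a-1) * (1 - X^(2*a)) := by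
      have := Ee_succ (a-1)
      rw [show a-1+1 = a by omega] at this
      exact this
    have H6 : Ee (m+1) = Ee m * (1 - X^(2*(m+1))) := Ee_succ m
    have H7 : (X:PS)^(2*a) * X^(2*(m+1-a)) = X^(2*(m+1)) := by
      rw [← pow_add]; congr 1; omega
    rw [show (2*(a:ℤ)).toNat = 2*a by omega]
    apply mul_right_cancel₀ (mul_ne_zero (Ee_ne_zero a) (Ee_ne_zero (m+1-a)))
    linear_combination H1 - X^(2*a) * gb m (a:ℤ) * Ee a * H4 - X^(2*a) * (1 - X^(2*(m+1-a))) * H2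
      - gb m ((a:ℤ)-1) * Ee (m+1-a) * H5 - (1 - X^(2*a)) * H3 + H6 + Ee m * H7
  · -- k = m+1
    subst heq
    have e1 : gb (m+1) ((m:ℤ)+1) = 1 := by
      have := gb_self (m+1); push_cast at this; exact this
    have e2 : gb m ((m:ℤ)+1) = 0 := gb_of_gt (by omega)
    have e3 : gb m ((m:ℤ)+1-1) = 1 := by
      rw [show (m:ℤ)+1-1 = ((m:ℕ):ℤ) by ring]; exact gb_self m
    rw [e1, e2, e3, mul_zero]
    ring
  · rw [gb_of_gt (m := m+1) (by push_cast; omega), gb_of_gt (m := m) (k := k) (by omega),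
      gb_of_gt (m := m) (k := k-1) (by omega), mul_zero, zero_add]

lemma Xpow_merge (a b : ℤ) (ha : 0 ≤ a) (hb : 0 ≤ b) :
    (X:PS) ^ a.toNat * X ^ b.toNat = X ^ (a+b).toNat := by
  rw [← pow_add]; congr 1; omega

/-- Two-step Pascal recurrence. -/
lemma pascal2step (m : ℕ) (j : ℤ) :
    gb (m+2) j = X ^ (2*j).toNat * gb m j + (1 + X^(2*m+2)) * gb m (j-1)
      + X ^ (2*((m:ℤ)+2-j)).toNat * gb m (j-2) := by
  have h1 := P1 (m+1) j
  rw [P2 m j, P2 m (j-1)] at h1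
  rw [show ((m+1:ℕ):ℤ)+1-j = (m:ℤ)+2-j by push_cast; ring] at h1
  rw [show m+1+1 = m+2 from rfl] at h1
  rw [h1, show j-1-1 = j-2 by ring]
  by_cases hj : 1 ≤ j ∧ j ≤ (m:ℤ)+1
  · have he : (X:PS) ^ (2*((m:ℤ)+2-j)).toNat * X ^ (2*(j-1)).toNat = X ^ (2*m+2) := by
      rw [← pow_add]; congr 1; omega
    linear_combination gb m (j-1) * he
  · have h0 : gb m (j-1) = 0 := by
      rcases (by omega : j-1 < 0 ∨ (m:ℤ) < j-1) with h | h
      · exact gb_of_neg h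
      · exact gb_of_gt h
    rw [h0]
    ring

/-- Sign `(-1)^k` as a power series. -/
def sg (k : ℤ) : PS := C ((Int.negOnePow k : ℤˣ) : ℤ)

lemma sg_zero : sg 0 = 1 := by simp [sg]

lemma sg_sub_one (k : ℤ) : sg (k-1) = - sg k := by
  have : k = (k-1) + 1 := by ring
  rw [sg, sg, this, Int.negOnePow_succ]
  simp

lemma sg_add_one (k : ℤ) : sg (k+1) = - sg k := by
  rw [sg, sg, Int.negOnePow_succ]
  simp

/-- Finite Jacobi triple product, specialized at `z = -1` (in `q`, with `q²`-binomials). -/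
lemma GB2 (N : ℕ) : Oo N ^ 2
    = ∑ k ∈ Icc (-(N:ℤ)) (N:ℤ), sg k * X ^ (k^2).toNat * gb (2*N) ((N:ℤ) + k) := by
  induction N with
  | zero =>
      simp [Oo, sg_zero, gb_zero]
  | succ N ih =>
      have hcast : ((N+1:ℕ):ℤ) = (N:ℤ)+1 := by push_cast; ring
      rw [hcast, show 2*(N+1) = 2*N+2 by ring]
      -- Step 1 : expand each summand with pascal2step
      have hexp : ∀ k ∈ Icc (-((N:ℤ)+1)) ((N:ℤ)+1),
          sg k * X ^ (k^2).toNat * gb (2*N+2) ((N:ℤ)+1+k)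
          = (sg k * (X ^ (k^2 + (2*((N:ℤ)+1+k))).toNat * gb (2*N) ((N:ℤ)+1+k)))
            + (sg k * X ^ (k^2).toNat * ((1 + X^(4*N+2)) * gb (2*N) ((N:ℤ)+k)))
            + (sg k * (X ^ (k^2 + (2*((N:ℤ)+1-k))).toNat * gb (2*N) ((N:ℤ)+k-1))) := by
        intro k hk
        simp only [Finset.mem_Icc] at hk
        have hp := pascal2step (2*N) ((N:ℤ)+1+k)
        rw [show ((2*N:ℕ):ℤ)+2-((N:ℤ)+1+k) = (N:ℤ)+1-k by push_cast; ring,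
          show (N:ℤ)+1+k-1 = (N:ℤ)+k by ring,
          show (N:ℤ)+1+k-2 = (N:ℤ)+k-1 by ring, show 2*(2*N)+2 = 4*N+2 by ring] at hp
        rw [hp]
        rw [mul_add, mul_add,
          show sg k * X ^ (k^2).toNat * (X ^ (2*((N:ℤ)+1+k)).toNat * gb (2*N) ((N:ℤ)+1+k))
            = sg k * ((X ^ (k^2).toNat * X ^ (2*((N:ℤ)+1+k)).toNat) * gb (2*N) ((N:ℤ)+1+k)) by
              ring,
          show sg k * X ^ (k^2).toNat * (X ^ (2*((N:ℤ)+1-k)).toNat * gb (2*N) ((N:ℤ)+k-1))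
            = sg k * ((X ^ (k^2).toNat * X ^ (2*((N:ℤ)+1-k)).toNat) * gb (2*N) ((N:ℤ)+k-1)) by
              ring,
          Xpow_merge _ _ (by positivity) (by omega), Xpow_merge _ _ (by positivity) (by omega)]
      rw [Finset.sum_congr rfl hexp, Finset.sum_add_distrib, Finset.sum_add_distrib]
      have hshift : ∀ (a b c : ℤ) (F : ℤ → PS),
          ∑ k ∈ Icc a b, F k = ∑ j ∈ Icc (a+c) (b+c), F (j-c) := by
        intro a b c F
        rw [← Finset.map_add_right_Icc, Finset.sum_map]
        refine Finset.sum_congr rfl fun k hk => ?_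
        refine congrArg F ?_
        simp [addRightEmbedding, mulRightEmbedding]
      -- Sum 1
      have hS1 : (∑ k ∈ Icc (-((N:ℤ)+1)) ((N:ℤ)+1),
            sg k * (X ^ (k^2 + 2*((N:ℤ)+1+k)).toNat * gb (2*N) ((N:ℤ)+1+k)))
          = ∑ k ∈ Icc (-(N:ℤ)) (N:ℤ),
            -(sg k * ((X ^ (k^2).toNat * X^(2*N+1)) * gb (2*N) ((N:ℤ)+k))) := by
        rw [hshift _ _ 1]
        rw [show -((N:ℤ)+1)+1 = -(N:ℤ) by ring, show ((N:ℤ)+1+1) = (N:ℤ)+2 by ring]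
        refine Eq.trans (Finset.sum_subset (Finset.Icc_subset_Icc le_rfl (by omega))
          (fun j hj hj' => ?_)).symm (Finset.sum_congr rfl fun j hj => ?_)
        · simp only [Finset.mem_Icc] at hj hj'
          rw [show (N:ℤ)+1+(j-1) = (N:ℤ)+j by ring, gb_of_gt (by push_cast; omega),
            mul_zero, mul_zero]
        · simp only [Finset.mem_Icc] at hj
          rw [show ((j-1)^2 + 2*((N:ℤ)+1+(j-1))) = j^2 + (2*(N:ℤ)+1) by ring]
          rw [show (N:ℤ)+1+(j-1) = (N:ℤ)+j by ring, sg_sub_one]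
          obtain ⟨E, hE, hEpos⟩ : ∃ E:ℤ, j^2 = E ∧ 0 ≤ E := ⟨j^2, rfl, sq_nonneg j⟩
          rw [hE, show (E + (2*(N:ℤ)+1)).toNat = E.toNat + (2*N+1) by omega, pow_add]
          ring
      -- Sum 3
      have hS3 : (∑ k ∈ Icc (-((N:ℤ)+1)) ((N:ℤ)+1),
            sg k * (X ^ (k^2 + 2*((N:ℤ)+1-k)).toNat * gb (2*N) ((N:ℤ)+k-1)))
          = ∑ k ∈ Icc (-(N:ℤ)) (N:ℤ),
            -(sg k * ((X ^ (k^2).toNat * X^(2*N+1)) * gb (2*N) ((N:ℤ)+k))) := by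
        rw [hshift _ _ (-1)]
        rw [show -((N:ℤ)+1)+(-1) = -(N:ℤ)-2 by ring, show ((N:ℤ)+1+(-1)) = (N:ℤ) by ring]
        refine Eq.trans (Finset.sum_subset (Finset.Icc_subset_Icc (by omega) le_rfl)
          (fun j hj hj' => ?_)).symm (Finset.sum_congr rfl fun j hj => ?_)
        · simp only [Finset.mem_Icc] at hj hj'
          rw [show (N:ℤ)+(j-(-1))-1 = (N:ℤ)+j by ring, gb_of_neg (by omega),
            mul_zero, mul_zero]
        · simp only [Finset.mem_Icc] at hj
          rw [show j - (-1) = j+1 by ring]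
          rw [show ((j+1)^2 + 2*((N:ℤ)+1-(j+1))) = j^2 + (2*(N:ℤ)+1) by ring]
          rw [show (N:ℤ)+(j+1)-1 = (N:ℤ)+j by ring, sg_add_one]
          obtain ⟨E, hE, hEpos⟩ : ∃ E:ℤ, j^2 = E ∧ 0 ≤ E := ⟨j^2, rfl, sq_nonneg j⟩
          rw [hE, show (E + (2*(N:ℤ)+1)).toNat = E.toNat + (2*N+1) by omega, pow_add]
          ring
      -- Sum 2
      have hS2 : (∑ k ∈ Icc (-((N:ℤ)+1)) ((N:ℤ)+1),
            sg k * X ^ (k^2).toNat * ((1 + X^(4*N+2)) * gb (2*N) ((N:ℤ)+k)))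
          = ∑ k ∈ Icc (-(N:ℤ)) (N:ℤ),
            sg k * X ^ (k^2).toNat * ((1 + X^(4*N+2)) * gb (2*N) ((N:ℤ)+k)) := by
        refine (Finset.sum_subset (Finset.Icc_subset_Icc (by omega) (by omega))
          (fun j hj hj' => ?_)).symm
        simp only [Finset.mem_Icc] at hj hj'
        rcases (by omega : (N:ℤ) < j ∨ j < -(N:ℤ)) with h | h
        · rw [gb_of_gt (by push_cast; omega), mul_zero, mul_zero]
        · rw [gb_of_neg (by omega), mul_zero, mul_zero]
      rw [hS1, hS2, hS3, ← Finset.sum_add_distrib, ← Finset.sum_add_distrib, Oo_succ,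
        mul_pow, ih, Finset.sum_mul]
      refine Finset.sum_congr rfl fun k hk => ?_
      rw [show 4*N+2 = (2*N+1)+(2*N+1) by ring, pow_add]
      ring


section Tools
variable {R : Type*} [CommRing R]

lemma dvd_sub_mul {D : PowerSeries R} {A B A' B' : PowerSeries R}
    (h1 : D ∣ A - B) (h2 : D ∣ A' - B') : D ∣ A * A' - B * B' := by
  have : A * A' - B * B' = (A - B) * A' + B * (A' - B') := by ring
  rw [this]
  exact dvd_add (h1.mul_right _) (h2.mul_left _)

lemma dvd_prod_sub_prod {ι : Type*} {D : PowerSeries R} (s : Finset ι) (f g : ι → PowerSeries R)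
    (h : ∀ i ∈ s, D ∣ f i - g i) : D ∣ (∏ i ∈ s, f i) - (∏ i ∈ s, g i) := by
  classical
  induction s using Finset.cons_induction with
  | empty => simp
  | cons a s ha ih =>
      rw [Finset.prod_cons, Finset.prod_cons]
      exact dvd_sub_mul (h a (Finset.mem_cons_self a s))
        (ih fun i hi => h i (Finset.mem_cons_of_mem hi))

lemma dvd_prod_sub_one {ι : Type*} {D : PowerSeries R} (s : Finset ι) (f : ι → PowerSeries R)
    (h : ∀ i ∈ s, D ∣ f i - 1) : D ∣ (∏ i ∈ s, f i) - 1 := by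
  have := dvd_prod_sub_prod s f (fun _ => 1) h
  simpa using this

lemma coeff_eq_of_dvd {d : ℕ} {A B : PowerSeries R} (h : (X : PowerSeries R)^d ∣ A - B)
    {n : ℕ} (hn : n < d) : coeff n A = coeff n B := by
  have := (PowerSeries.X_pow_dvd_iff.mp h) n hn
  rw [map_sub, sub_eq_zero] at this
  exact this

end Tools

lemma Ee_split {a N : ℕ} (h : a ≤ N) :
    Ee N = Ee a * ∏ m ∈ Icc (a+1) N, (1 - (X:PS) ^ (2*m)) := by
  rw [Ee, Ee, show Icc 1 N = Ioc 0 N from (Finset.Icc_add_one_left_eq_Ioc 0 N),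
    show Icc 1 a = Ioc 0 a from (Finset.Icc_add_one_left_eq_Ioc 0 a),
    show Icc (a+1) N = Ioc a N from (Finset.Icc_add_one_left_eq_Ioc a N)]
  exact (Finset.prod_Ioc_consecutive _ (Nat.zero_le a) h).symm

lemma one_sub_pow_congr {d e : ℕ} (h : d ≤ e) : (X:PS)^d ∣ (1 - X^e) - 1 := by
  rw [show (1 - (X:PS)^e) - 1 = -(X^e) by ring]
  exact (pow_dvd_pow _ h).neg_right

/-- key approximation : `Ee N ^ 2 ≡ Ee (N+b) * Ee (N-b)  mod X^(2*(N-b)+2)`. -/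
lemma Ee_approx (N b : ℕ) (hb : b ≤ N) :
    (X:PS)^(2*(N-b)+2) ∣ Ee N ^ 2 - Ee (N+b) * Ee (N-b) := by
  set a := N - b with ha
  have e1 : Ee N = Ee a * ∏ m ∈ Icc (a+1) N, (1 - (X:PS) ^ (2*m)) := Ee_split (by omega)
  have e2 : Ee (N+b) = Ee a * ∏ m ∈ Icc (a+1) (N+b), (1 - (X:PS) ^ (2*m)) := Ee_split (by omega)
  have hU : (X:PS)^(2*a+2) ∣ (∏ m ∈ Icc (a+1) N, (1 - (X:PS) ^ (2*m))) - 1 :=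
    dvd_prod_sub_one _ _ fun m hm => one_sub_pow_congr
      (by simp only [Finset.mem_Icc] at hm; omega)
  have hV : (X:PS)^(2*a+2) ∣ (∏ m ∈ Icc (a+1) (N+b), (1 - (X:PS) ^ (2*m))) - 1 :=
    dvd_prod_sub_one _ _ fun m hm => one_sub_pow_congr
      (by simp only [Finset.mem_Icc] at hm; omega)
  have : Ee N ^ 2 - Ee (N+b) * Ee (N-b)
      = Ee a ^ 2 * ((∏ m ∈ Icc (a+1) N, (1 - (X:PS) ^ (2*m))) * (∏ m ∈ Icc (a+1) N, (1 - (X:PS) ^ (2*m)))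
        - (∏ m ∈ Icc (a+1) (N+b), (1 - (X:PS) ^ (2*m)))) := by
    rw [← ha, e1, e2]; ring
  rw [this]
  refine Dvd.dvd.mul_left ?_ _
  have := dvd_sub_mul (A := ∏ m ∈ Icc (a+1) N, (1 - (X:PS) ^ (2*m))) (B := 1)
    (A' := ∏ m ∈ Icc (a+1) N, (1 - (X:PS) ^ (2*m))) (B' := 1) hU hU
  have h2 := dvd_sub (dvd_sub_mul hU hU) hV
  simpa using h2

/-- The theta function `Φ = ∑_{|k| ≤ N} (-1)^k q^{k²}`. -/
def Phi (N : ℕ) : PS := ∑ k ∈ Icc (-(N:ℤ)) (N:ℤ), sg k * X ^ (k^2).toNat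

/-- Truncated Gauss identity : `(q;q)_{2N}² ≡ Φ_N · (q²;q²)_{2N}  mod q^{2N+1}`. -/
lemma starGauss (N : ℕ) : (X:PS)^(2*N+1) ∣ PA (2*N)^2 - Phi N * Ee (2*N) := by
  have h1 : PA (2*N)^2 = ∑ k ∈ Icc (-(N:ℤ)) (N:ℤ),
      sg k * X^(k^2).toNat * (gb (2*N) ((N:ℤ)+k) * Ee N ^2) := by
    rw [PA_interleave, mul_pow, GB2, Finset.sum_mul]
    exact Finset.sum_congr rfl fun k hk => by ring
  have h2 : Phi N * Ee (2*N) = ∑ k ∈ Icc (-(N:ℤ)) (N:ℤ),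
      sg k * X^(k^2).toNat * Ee (2*N) := Finset.sum_mul _ _ _
  rw [h1, h2, ← Finset.sum_sub_distrib]
  refine Finset.dvd_sum fun k hk => ?_
  simp only [Finset.mem_Icc] at hk
  set b := k.natAbs with hbdef
  have hbN : b ≤ N := by omega
  -- the two Ee-indices
  have hkey : (X:PS)^(2*(N-b)+2) ∣ gb (2*N) ((N:ℤ)+k) * Ee N ^ 2 - Ee (2*N) := by
    have hgb : gb (2*N) ((N:ℤ)+k) * Ee (((N:ℤ)+k).toNat) * Ee (2*N - ((N:ℤ)+k).toNat)
        = Ee (2*N) := GB1 (by omega) (by push_cast; omega)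
    have hEE : Ee (((N:ℤ)+k).toNat) * Ee (2*N - ((N:ℤ)+k).toNat) = Ee (N+b) * Ee (N-b) := by
      rcases le_or_gt 0 k with h | h
      · rw [show ((N:ℤ)+k).toNat = N + b by omega, show 2*N - (N+b) = N - b by omega]
      · rw [show ((N:ℤ)+k).toNat = N - b by omega, show 2*N - (N-b) = N + b by omega,
          mul_comm]
    have : gb (2*N) ((N:ℤ)+k) * Ee N ^ 2 - Ee (2*N)
        = gb (2*N) ((N:ℤ)+k) * (Ee N ^ 2 - Ee (N+b) * Ee (N-b))
          + (gb (2*N) ((N:ℤ)+k) * (Ee (((N:ℤ)+k).toNat) * Ee (2*N - ((N:ℤ)+k).toNat)) - Ee (2*N)) := by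
      rw [hEE]; ring
    rw [this, show gb (2*N) ((N:ℤ)+k) * (Ee (((N:ℤ)+k).toNat) * Ee (2*N - ((N:ℤ)+k).toNat))
        = gb (2*N) ((N:ℤ)+k) * Ee (((N:ℤ)+k).toNat) * Ee (2*N - ((N:ℤ)+k).toNat) by ring, hgb,
      sub_self, add_zero]
    exact (Ee_approx N b hbN).mul_left _
  -- assemble
  have hsplit : sg k * X^(k^2).toNat * (gb (2*N) ((N:ℤ)+k) * Ee N ^2)
      - sg k * X^(k^2).toNat * Ee (2*N)
      = sg k * (X^(k^2).toNat * (gb (2*N) ((N:ℤ)+k) * Ee N ^2 - Ee (2*N))) := by ring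
  rw [hsplit]
  refine Dvd.dvd.mul_left ?_ _
  obtain ⟨E, hE⟩ := hkey
  rw [hE, ← mul_assoc, ← pow_add]
  have hexp : 2*N+1 ≤ (k^2).toNat + (2*(N-b)+2) := by
    have h1 : (k^2).toNat = b*b := by
      rw [sq, ← Int.natAbs_mul_self, Int.toNat_natCast]
    rw [h1]
    zify [hbN]
    nlinarith [sq_nonneg ((b:ℤ) - 1)]
  exact ((pow_dvd_pow (X:PS) hexp)).mul_right E

abbrev R3 := ZMod 3
abbrev PS3 := PowerSeries R3
noncomputable abbrev mp : PS →+* PS3 := PowerSeries.map (Int.castRingHom R3)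

lemma three_eq_zero : (3 : PS3) = 0 := by
  rw [← map_ofNat (C (R := R3)) 3, show (3 : R3) = 0 by decide, map_zero]

lemma cube (y : PS3) : (1 - y)^3 = 1 - y^3 := by
  linear_combination (y^2 - y) * three_eq_zero

/-- `F_N = ∏ (1-X^m)(1-X^{2m})`, matching the hypothesis. -/
def Ftot (n : ℕ) : PS := ∏ m ∈ Icc 1 n, ((1 - (X:PS)^m) * (1 - X^(2*m)))

lemma Ftot_eq (n : ℕ) : Ftot n = PA n * Ee n := by
  rw [Ftot, PA, Ee, ← Finset.prod_mul_distrib]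

lemma Ftot_stab {n N : ℕ} (h : n ≤ N) : (X:PS)^(n+1) ∣ Ftot N - Ftot n := by
  have hsplit : Ftot N = Ftot n * ∏ m ∈ Icc (n+1) N, ((1 - (X:PS)^m) * (1 - X^(2*m))) := by
    rw [Ftot, Ftot, show Icc 1 N = Ioc 0 N from (Finset.Icc_add_one_left_eq_Ioc 0 N),
      show Icc 1 n = Ioc 0 n from (Finset.Icc_add_one_left_eq_Ioc 0 n),
      show Icc (n+1) N = Ioc n N from (Finset.Icc_add_one_left_eq_Ioc n N)]
    exact (Finset.prod_Ioc_consecutive _ (Nat.zero_le n) h).symm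
  rw [hsplit, show Ftot n * (∏ m ∈ Icc (n+1) N, ((1 - (X:PS)^m) * (1 - X^(2*m)))) - Ftot n
    = Ftot n * ((∏ m ∈ Icc (n+1) N, ((1 - (X:PS)^m) * (1 - X^(2*m)))) - 1) by ring]
  refine Dvd.dvd.mul_left ?_ _
  refine dvd_prod_sub_one _ _ fun m hm => ?_
  simp only [Finset.mem_Icc] at hm
  have := dvd_sub_mul (one_sub_pow_congr (show n+1 ≤ m by omega))
    (one_sub_pow_congr (show n+1 ≤ 2*m by omega))
  simpa using this

/-- `G_N = ∏ (1-X^{3m})(1-X^{6m})` over `ZMod 3`. -/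
def GT (N : ℕ) : PS3 := ∏ m ∈ Icc 1 N, ((1 - (X:PS3)^(3*m)) * (1 - X^(6*m)))

/-- `H_N = ∏ (1-X^{6m})` over `ZMod 3`. -/
def HT (N : ℕ) : PS3 := ∏ m ∈ Icc 1 N, (1 - (X:PS3)^(6*m))

lemma map_Ftot_cube (N : ℕ) : (mp (Ftot N))^3 = GT N := by
  rw [Ftot, map_prod, ← Finset.prod_pow, GT]
  refine Finset.prod_congr rfl fun m hm => ?_
  simp only [map_mul, map_sub, map_one, map_pow, PowerSeries.map_X]
  rw [mul_pow, cube, cube, ← pow_mul, ← pow_mul, show m*3 = 3*m by ring,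
    show 2*m*3 = 6*m by ring]

lemma map_Ee_cube (N : ℕ) : mp (Ee N ^ 3) = HT N := by
  rw [map_pow, Ee, map_prod, ← Finset.prod_pow, HT]
  refine Finset.prod_congr rfl fun m hm => ?_
  simp only [map_sub, map_one, map_pow, PowerSeries.map_X]
  rw [cube, ← pow_mul, show 2*m*3 = 6*m by ring]

lemma support_prod {ι : Type*} (s : Finset ι) (f : ι → PS3)
    (hf : ∀ i ∈ s, ∀ j, ¬ (3 ∣ j) → coeff j (f i) = 0) :
    ∀ j, ¬ (3 ∣ j) → coeff j (∏ i ∈ s, f i) = 0 := by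
  classical
  induction s using Finset.cons_induction with
  | empty =>
      intro j hj
      have hj0 : j ≠ 0 := fun h => hj (h ▸ dvd_zero 3)
      simp [coeff_one, hj0]
  | cons a s ha ih =>
      intro j hj
      rw [Finset.prod_cons, coeff_mul]
      refine Finset.sum_eq_zero fun p hp => ?_
      rw [Finset.HasAntidiagonal.mem_antidiagonal] at hp
      rcases (show ¬ (3 ∣ p.1) ∨ ¬ (3 ∣ p.2) by omega) with h | h
      · rw [hf a (Finset.mem_cons_self a s) p.1 h, zero_mul]
      · rw [ih (fun i hi => hf i (Finset.mem_cons_of_mem hi)) p.2 h, mul_zero]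

lemma coeff_one_sub_X_pow (e j : ℕ) (h : j ≠ 0) (h2 : j ≠ e) :
    coeff j (1 - (X:PS3)^e) = 0 := by
  rw [map_sub, coeff_one, coeff_X_pow, if_neg h, if_neg h2]
  ring

lemma GT_support (N : ℕ) : ∀ j, ¬ (3 ∣ j) → coeff j (GT N) = 0 := by
  refine support_prod _ _ fun m hm j hj => ?_
  rw [coeff_mul]
  refine Finset.sum_eq_zero fun p hp => ?_
  rw [Finset.HasAntidiagonal.mem_antidiagonal] at hp
  rcases (show ¬ (3 ∣ p.1) ∨ ¬ (3 ∣ p.2) by omega) with h | h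
  · rw [coeff_one_sub_X_pow (3*m) p.1 (by omega) (by omega), zero_mul]
  · rw [coeff_one_sub_X_pow (6*m) p.2 (by omega) (by omega), mul_zero]

lemma HT_support (N : ℕ) : ∀ j, ¬ (3 ∣ j) → coeff j (HT N) = 0 :=
  support_prod _ _ fun m hm j hj =>
    coeff_one_sub_X_pow (6*m) j (by omega) (by omega)

lemma sq_mod_three (b : ℕ) : ¬ (b*b) % 3 = 2 := by
  have h := Nat.mul_mod b b 3
  rcases (show b % 3 = 0 ∨ b % 3 = 1 ∨ b % 3 = 2 by omega) with h' | h' | h' <;>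
    rw [h'] at h <;> omega

lemma Phi_support (N : ℕ) : ∀ j, j % 3 = 2 → coeff j (Phi N) = 0 := by
  intro j hj
  rw [Phi, map_sum]
  refine Finset.sum_eq_zero fun k hk => ?_
  rw [sg, coeff_C_mul, coeff_X_pow, if_neg, mul_zero]
  intro h
  have h1 : (k^2).toNat = k.natAbs * k.natAbs := by
    rw [sq, ← Int.natAbs_mul_self, Int.toNat_natCast]
  rw [h1] at h
  exact sq_mod_three k.natAbs (h ▸ hj)

lemma constCoeff_GT (N : ℕ) : coeff 0 (GT N) = 1 := by
  rw [coeff_zero_eq_constantCoeff, GT, map_prod]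
  refine Finset.prod_eq_one fun m hm => ?_
  simp only [Finset.mem_Icc] at hm
  rw [map_mul, map_sub, map_one, map_pow, constantCoeff_X, zero_pow (by omega),
    map_sub, map_one, map_pow, constantCoeff_X, zero_pow (by omega)]
  ring

theorem chan_congruence_mod_three'
    (c : ℕ → ℤ)
    (hc : ∀ n : ℕ, PowerSeries.coeff (R := ℤ) n ((PowerSeries.mk c) *
        ∏ m ∈ Finset.Icc 1 n, ((1 - PowerSeries.X ^ m) * (1 - PowerSeries.X ^ (2 * m)))) =
      if n = 0 then 1 else 0) :
    ∀ n : ℕ, (3 : ℤ) ∣ c (3 * n + 2) := by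
  have hc' : ∀ n : ℕ, coeff n (mk c * Ftot n) = if n = 0 then 1 else 0 := hc
  -- unit property
  have L2 : ∀ N : ℕ, (X:PS)^(N+1) ∣ (mk c * Ftot N) - 1 := by
    intro N
    rw [PowerSeries.X_pow_dvd_iff]
    intro j hj
    have hstab : coeff j (mk c * Ftot N) = coeff j (mk c * Ftot j) := by
      refine coeff_eq_of_dvd (d := j+1) ?_ (by omega)
      rw [show mk c * Ftot N - mk c * Ftot j = mk c * (Ftot N - Ftot j) by ring]
      exact (Ftot_stab (by omega)).mul_left _
    rw [map_sub, hstab, hc' j, coeff_one, sub_self]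
  have L3 : ∀ M N : ℕ, M ≤ N → coeff M (mk c * Ftot N ^ 3) = coeff M (Ftot N ^ 2) := by
    intro M N h
    refine coeff_eq_of_dvd (d := N+1) ?_ (by omega)
    rw [show mk c * Ftot N ^ 3 - Ftot N ^ 2 = ((mk c * Ftot N) - 1) * Ftot N ^ 2 by ring]
    exact (L2 N).mul_right _
  suffices H : ∀ n : ℕ, ((c (3*n+2) : R3)) = 0 by
    intro n
    exact (ZMod.intCast_zmod_eq_zero_iff_dvd _ 3).mp (H n)
  intro n
  induction n using Nat.strong_induction_on with
  | _ n IH =>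
  -- notation
  have hval : coeff (3*n+2) (mp (Ftot (2*(3*n+2)) ^ 2)) = 0 := by
    set M := 3*n+2 with hM
    have hdvd : (X:PS)^(2*M+1) ∣ Ftot (2*M) ^ 2 - Phi M * Ee (2*M) ^ 3 := by
      have h2 : Ftot (2*M) ^2 - Phi M * Ee (2*M) ^3
          = (PA (2*M) ^2 - Phi M * Ee (2*M)) * Ee (2*M) ^2 := by
        rw [Ftot_eq]; ring
      rw [h2]
      exact (starGauss M).mul_right _
    have hdvd3 : (X:PS3)^(2*M+1) ∣ mp (Ftot (2*M) ^ 2) - mp (Phi M) * HT (2*M) := by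
      have h := map_dvd mp hdvd
      rw [map_pow, PowerSeries.map_X, map_sub, map_mul, map_Ee_cube] at h
      exact h
    have hco : coeff M (mp (Ftot (2*M) ^ 2)) = coeff M (mp (Phi M) * HT (2*M)) :=
      coeff_eq_of_dvd hdvd3 (by omega)
    rw [hco, coeff_mul]
    refine Finset.sum_eq_zero fun p hp => ?_
    rw [Finset.HasAntidiagonal.mem_antidiagonal] at hp
    by_cases h3 : 3 ∣ p.2
    · have hp1 : p.1 % 3 = 2 := by omega
      rw [PowerSeries.coeff_map, Phi_support M p.1 hp1, map_zero, zero_mul]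
    · rw [HT_support (2*M) p.2 h3, mul_zero]
  -- main identity
  have h0 : coeff (3*n+2) (mp (mk c) * GT (2*(3*n+2))) = 0 := by
    rw [← map_Ftot_cube]
    have hMM : mp (mk c) * (mp (Ftot (2*(3*n+2))))^3 = mp (mk c * Ftot (2*(3*n+2)) ^ 3) := by
      rw [map_mul, map_pow]
    calc coeff (3*n+2) (mp (mk c) * (mp (Ftot (2*(3*n+2))))^3)
        = coeff (3*n+2) (mp (mk c * Ftot (2*(3*n+2)) ^ 3)) := congrArg _ hMM
      _ = ((coeff (3*n+2) (mk c * Ftot (2*(3*n+2)) ^ 3) : ℤ) : R3) := by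
          rw [PowerSeries.coeff_map]; rfl
      _ = ((coeff (3*n+2) (Ftot (2*(3*n+2)) ^ 2) : ℤ) : R3) := by
          rw [L3 (3*n+2) (2*(3*n+2)) (by omega)]
      _ = coeff (3*n+2) (mp (Ftot (2*(3*n+2)) ^ 2)) := by
          rw [PowerSeries.coeff_map]; rfl
      _ = 0 := hval
  rw [coeff_mul, Finset.sum_eq_single_of_mem (3*n+2, 0)
    (by simp)
    (fun p hp hne => ?_)] at h0
  · rw [constCoeff_GT, mul_one, PowerSeries.coeff_map, coeff_mk] at h0
    exact h0
  · rw [Finset.HasAntidiagonal.mem_antidiagonal] at hp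
    have hb : p.2 ≠ 0 := by
      intro h
      exact hne (by rw [Prod.ext_iff]; omega)
    by_cases h3 : 3 ∣ p.2
    · obtain ⟨t, ht, htn⟩ : ∃ t, p.1 = 3*t+2 ∧ t < n := ⟨(p.1 - 2)/3, by omega, by omega⟩
      rw [PowerSeries.coeff_map, coeff_mk, ht]
      have := IH t htn
      simp only [Int.coe_castRingHom]
      rw [this, zero_mul]
    · rw [GT_support (2*(3*n+2)) p.2 h3, mul_zero]

/-- With `c₂(n)` defined by
`∑ c₂(n) qⁿ = ∏_{n≥1} 1/((1 - qⁿ)(1 - q^{2n}))` in `ℤ[[q]]`, we have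
`c₂(3n + 2) ≡ 0 (mod 3)` for all `n ≥ 0`. -/
theorem chan_congruence_mod_three
    (c : ℕ → ℤ)
    (hc : ∀ n : ℕ, PowerSeries.coeff (R := ℤ) n ((PowerSeries.mk c) *
        ∏ m ∈ Finset.Icc 1 n, ((1 - PowerSeries.X ^ m) * (1 - PowerSeries.X ^ (2 * m)))) =
      if n = 0 then 1 else 0) :
    ∀ n : ℕ, (3 : ℤ) ∣ c (3 * n + 2) :=
  chan_congruence_mod_three' c hc
end ChanAux
end

section
/- Let N > 1 be an integer and 0 ≤ a ≤ 2. If c_N(3n + a) ≡ 0 (mod 3) for all integers n ≥ 0, then N = 2 and a = 2. -/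
open PowerSeries

lemma cN_small_coeffs (N : ℕ) (hN : 2 ≤ N) (c : ℕ → ℤ)
    (hc : ∀ n : ℕ, PowerSeries.coeff (R := ℤ) n ((PowerSeries.mk c) *
        ∏ m ∈ Finset.Icc 1 n, ((1 - PowerSeries.X ^ m) * (1 - PowerSeries.X ^ (N * m)))) =
      if n = 0 then 1 else 0) :
    c 0 = 1 ∧ c 1 = 1 ∧ (N = 2 → c 2 = 3) ∧ (3 ≤ N → c 2 = 2) := by
  have h0 := hc 0
  simp at h0
  have h1 := hc 1
  have h2 := hc 2
  rw [show Finset.Icc 1 1 = {1} from rfl, Finset.prod_singleton] at h1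
  rw [show Finset.Icc 1 2 = {1, 2} from rfl, Finset.prod_insert (by decide),
    Finset.prod_singleton] at h2
  simp only [mul_sub, sub_mul, mul_one, one_mul, mul_assoc, ← pow_succ', ← pow_add,
    map_sub, map_add, coeff_mul_X_pow', coeff_mk, if_neg, if_pos] at h1 h2
  rw [if_pos (le_refl 1), if_neg (by omega : ¬ N ≤ 1), if_neg (by omega : ¬ 1 + N ≤ 1)] at h1
  norm_num at h1
  have hc1 : c 1 = 1 := by linarith
  refine ⟨h0, hc1, ?_, ?_⟩
  · rintro rfl
    norm_num at h2
    linarith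
  · intro h3
    rw [if_pos (by omega : 1 ≤ 2), if_pos (le_refl 2),
      if_neg (by omega : ¬ N ≤ 2), if_neg (by omega : ¬ 1 + N ≤ 2),
      if_neg (by omega : ¬ 1 + 2 ≤ 2), if_neg (by omega : ¬ N + 2 ≤ 2),
      if_neg (by omega : ¬ 1 + N + 2 ≤ 2), if_neg (by omega : ¬ N * 2 ≤ 2),
      if_neg (by omega : ¬ 1 + N * 2 ≤ 2), if_neg (by omega : ¬ N + N * 2 ≤ 2),
      if_neg (by omega : ¬ 1 + N + N * 2 ≤ 2), if_neg (by omega : ¬ 2 + N * 2 ≤ 2),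
      if_neg (by omega : ¬ 1 + (2 + N * 2) ≤ 2), if_neg (by omega : ¬ N + (2 + N * 2) ≤ 2),
      if_neg (by omega : ¬ 1 + N + (2 + N * 2) ≤ 2)] at h2
    norm_num at h2
    linarith

/-- For `N > 1`, `0 ≤ a ≤ 2` and `c_N(n)` defined by
`∑ c_N(n) qⁿ = ∏_{n≥1} 1/((1 - qⁿ)(1 - q^{N n}))` in `ℤ[[q]]`:
if `c_N(3n + a) ≡ 0 (mod 3)` for all `n ≥ 0`, then `N = 2` and `a = 2`. -/
theorem cN_congruence_mod_three_necessary
    (N : ℕ) (hN : 1 < N) (c : ℕ → ℤ)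
    (hc : ∀ n : ℕ, PowerSeries.coeff (R := ℤ) n ((PowerSeries.mk c) *
        ∏ m ∈ Finset.Icc 1 n, ((1 - PowerSeries.X ^ m) * (1 - PowerSeries.X ^ (N * m)))) =
      if n = 0 then 1 else 0)
    (a : ℕ) (ha : a ≤ 2)
    (hcong : ∀ n : ℕ, (3 : ℤ) ∣ c (3 * n + a)) :
    N = 2 ∧ a = 2 := by
  obtain ⟨h0, h1, h2a, h2b⟩ := cN_small_coeffs N hN c hc
  have key := hcong 0
  interval_cases a
  · rw [show 3 * 0 + 0 = 0 from rfl, h0] at key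
    omega
  · rw [show 3 * 0 + 1 = 1 from rfl, h1] at key
    omega
  · refine ⟨?_, rfl⟩
    by_contra hne
    have h3 : 3 ≤ N := by omega
    rw [show 3 * 0 + 2 = 2 from rfl, h2b h3] at key
    omega
end

section
/- Let N > 1 be an integer and 0 ≤ a ≤ 6. If c_N(7n + a) ≡ 0 (mod 7) for all integers n ≥ 0, then N ≡ 0 (mod 7) and a = 5. -/
namespace CN7

open Polynomial Finset

abbrev R7 := ZMod 7
abbrev P7 := Polynomial R7

/-- coefficients agree up to degree d -/
def Trunc (d : ℕ) (f g : P7) : Prop := ∀ n ≤ d, f.coeff n = g.coeff n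

lemma Trunc.refl (d f) : Trunc d f f := fun _ _ => rfl
lemma Trunc.symm {d f g} (h : Trunc d f g) : Trunc d g f := fun n hn => (h n hn).symm
lemma Trunc.trans {d f g h} (h1 : Trunc d f g) (h2 : Trunc d g h) : Trunc d f h :=
  fun n hn => (h1 n hn).trans (h2 n hn)
lemma Trunc.mono {d d' f g} (h : Trunc d f g) (hd : d' ≤ d) : Trunc d' f g :=
  fun n hn => h n (hn.trans hd)
lemma Trunc.add {d f g f' g'} (h : Trunc d f g) (h' : Trunc d f' g') :
    Trunc d (f + f') (g + g') := fun n hn => by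
  simp [coeff_add, h n hn, h' n hn]
lemma Trunc.mul {d f g f' g'} (h : Trunc d f g) (h' : Trunc d f' g') :
    Trunc d (f * f') (g * g') := by
  intro n hn
  rw [coeff_mul, coeff_mul]
  refine Finset.sum_congr rfl (fun p hp => ?_)
  rw [Finset.HasAntidiagonal.mem_antidiagonal] at hp
  rw [h p.1 (by omega), h' p.2 (by omega)]
lemma Trunc.pow {d f g} (h : Trunc d f g) (k : ℕ) : Trunc d (f ^ k) (g ^ k) := by
  induction k with
  | zero => simpa using Trunc.refl d 1
  | succ k ih => rw [pow_succ, pow_succ]; exact ih.mul h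

lemma Trunc.sum {d : ℕ} {ι : Type*} (s : Finset ι) (f g : ι → P7)
    (h : ∀ i ∈ s, Trunc d (f i) (g i)) : Trunc d (∑ i ∈ s, f i) (∑ i ∈ s, g i) := by
  intro n hn
  rw [Polynomial.finset_sum_coeff, Polynomial.finset_sum_coeff]
  exact Finset.sum_congr rfl fun i hi => h i hi n hn

lemma Trunc.cancel {d : ℕ} {f g h : P7} (h0 : h.coeff 0 = 1)
    (ht : Trunc d (f * h) (g * h)) : Trunc d f g := by
  intro n hn
  induction n using Nat.strong_induction_on with
  | _ n ih =>
    have hfm := ht n hn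
    rw [coeff_mul, coeff_mul, Finset.Nat.sum_antidiagonal_eq_sum_range_succ_mk,
      Finset.Nat.sum_antidiagonal_eq_sum_range_succ_mk, Finset.sum_range_succ,
      Finset.sum_range_succ] at hfm
    simp only [Nat.sub_self, h0, mul_one] at hfm
    have hS : ∑ k ∈ Finset.range n, f.coeff k * h.coeff (n - k)
        = ∑ k ∈ Finset.range n, g.coeff k * h.coeff (n - k) := by
      refine Finset.sum_congr rfl fun k hk => ?_
      rw [Finset.mem_range] at hk
      rw [ih k hk (by omega)]
    rw [hS] at hfm
    exact add_left_cancel hfm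

lemma coeff_mul_X_pow_of_lt (f : P7) {s n : ℕ} (h : n < s) : (f * X ^ s).coeff n = 0 := by
  rw [Polynomial.coeff_mul_X_pow']
  simp [Nat.not_le.mpr h]

lemma trunc_mul_one_sub {d s : ℕ} (f : P7) (h : d < s) : Trunc d (f * (1 - X ^ s)) f := by
  intro n hn
  rw [mul_sub, mul_one, coeff_sub, coeff_mul_X_pow_of_lt f (by omega), sub_zero]

lemma trunc_monomial_high {d s : ℕ} (c : P7) (hc : ∃ z : ℤ, c = (z : P7)) (h : d < s) :
    Trunc d (c * X ^ s) 0 := by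
  intro n hn
  obtain ⟨z, rfl⟩ := hc
  rw [coeff_zero, ← Polynomial.C_eq_intCast, Polynomial.coeff_C_mul, coeff_X_pow]
  simp only [mul_ite, mul_one, mul_zero]
  rw [if_neg (by omega)]

/-- ∏_{m=1}^{K} (1 - X^m) over ZMod 7 -/
noncomputable def qq (K : ℕ) : P7 := ∏ m ∈ Finset.Icc 1 K, (1 - X ^ m)

lemma qq_zero : qq 0 = 1 := by simp [qq]

lemma qq_succ (K : ℕ) : qq (K + 1) = qq K * (1 - X ^ (K + 1)) := by
  rw [qq, qq, ← Finset.prod_Icc_succ_top (by omega)]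

lemma qq_coeff_zero (K : ℕ) : (qq K).coeff 0 = 1 := by
  induction K with
  | zero => simp [qq_zero]
  | succ K ih =>
    rw [qq_succ, Polynomial.mul_coeff_zero, ih]
    simp [coeff_X_pow]

lemma trunc_qq {d a b : ℕ} (hd : d ≤ a) (hab : a ≤ b) : Trunc d (qq b) (qq a) := by
  induction b with
  | zero =>
    have ha : a = 0 := by omega
    subst ha; exact Trunc.refl _ _
  | succ b ih =>
    rcases Nat.eq_or_lt_of_le hab with h | h
    · subst h; exact Trunc.refl _ _
    · have hab' : a ≤ b := by omega
      rw [qq_succ]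
      exact (trunc_mul_one_sub (qq b) (by omega)).trans (ih hab')
/-! ### Jacobi: sign, triangular numbers, Gaussian-binomial-like polynomials -/

def eps (k : ℤ) : ℤ := if k % 2 = 0 then 1 else -1

lemma eps_succ (k : ℤ) : eps (k + 1) = -eps k := by
  unfold eps; split <;> split <;> omega

lemma eps_pred (k : ℤ) : eps (k - 1) = -eps k := by
  unfold eps; split <;> split <;> omega

lemma eps_negpair (j : ℤ) : eps (-(j + 1)) = -eps j := by
  unfold eps; split <;> split <;> omega

def tZ (k : ℤ) : ℤ := k * (k + 1) / 2

lemma tZ_double (k : ℤ) : 2 * tZ k = k * (k + 1) := by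
  obtain ⟨m, hm⟩ := Int.even_mul_succ_self k
  unfold tZ; rw [hm]; omega

lemma consec_nonneg (k : ℤ) : 0 ≤ k * (k + 1) := by
  rcases le_or_gt 0 k with h | h
  · exact mul_nonneg h (by omega)
  · nlinarith [mul_nonneg (show (0:ℤ) ≤ -k by omega) (show (0:ℤ) ≤ -(k+1) by omega)]

lemma tZ_nonneg (k : ℤ) : 0 ≤ tZ k := by
  have h := tZ_double k
  have h2 := consec_nonneg k
  omega

lemma tZ_succ (k : ℤ) : tZ (k + 1) = tZ k + (k + 1) := by
  have h1 := tZ_double k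
  have h2 := tZ_double (k + 1)
  have h3 : (k + 1) * (k + 1 + 1) = k * (k + 1) + 2 * (k + 1) := by ring
  omega

lemma tZ_negpair (j : ℤ) : tZ (-(j + 1)) = tZ j := by
  unfold tZ
  have : -(j + 1) * (-(j + 1) + 1) = j * (j + 1) := by ring
  rw [this]

lemma tZ_ge (k : ℤ) : (k.natAbs : ℤ) - 1 ≤ tZ k := by
  have h := tZ_double k
  have h3 := consec_nonneg (k + 1)
  have h2 : (k + 1) * (k + 1 + 1) = k * (k + 1) + 2 * (k + 1) := by ring
  have h5 := consec_nonneg (k - 1)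
  have h6 : (k - 1) * (k - 1 + 1) = k * (k + 1) - 2 * k := by ring
  omega

def tN (k : ℤ) : ℕ := (tZ k).toNat

noncomputable def Bp : ℕ → ℤ → P7
  | 0, j => if j = 0 then 1 else 0
  | n + 1, j => Bp n (j - 1) + X ^ j.toNat * Bp n j

lemma Bp_zero_eq (j : ℤ) : Bp 0 j = if j = 0 then 1 else 0 := rfl

lemma Bp_succ_eq (n : ℕ) (j : ℤ) : Bp (n + 1) j = Bp n (j - 1) + X ^ j.toNat * Bp n j := rfl

lemma Bp_neg : ∀ (n : ℕ) (j : ℤ), j < 0 → Bp n j = 0 := by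
  intro n
  induction n with
  | zero => intro j hj; rw [Bp_zero_eq, if_neg (by omega)]
  | succ n ih => intro j hj; rw [Bp_succ_eq, ih _ (by omega), ih _ hj, mul_zero, add_zero]

lemma Bp_gt : ∀ (n : ℕ) (j : ℤ), (n : ℤ) < j → Bp n j = 0 := by
  intro n
  induction n with
  | zero => intro j hj; rw [Bp_zero_eq, if_neg (by omega)]
  | succ n ih =>
    intro j hj
    rw [Bp_succ_eq, ih _ (by push_cast; omega), ih _ (by push_cast; omega), mul_zero, add_zero]

lemma Bp_zero_right : ∀ n : ℕ, Bp n 0 = 1 := by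
  intro n
  induction n with
  | zero => rw [Bp_zero_eq, if_pos rfl]
  | succ n ih =>
    rw [Bp_succ_eq, Bp_neg _ _ (by omega), ih, zero_add, Int.toNat_zero, pow_zero, one_mul]

/-- dual Pascal rule -/
lemma Bp_DP : ∀ (n : ℕ) (j : ℤ), Bp (n + 1) j = X ^ (((n : ℤ) + 1 - j).toNat) * Bp n (j - 1) + Bp n j := by
  intro n
  induction n with
  | zero =>
    intro j
    rcases eq_or_ne j 0 with rfl | h0
    · simp [Bp_succ_eq, Bp_zero_eq]
    · rcases eq_or_ne j 1 with rfl | h1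
      · norm_num [Bp_succ_eq, Bp_zero_eq]
      · simp [Bp_succ_eq, Bp_zero_eq, h0, h1, show j - 1 ≠ 0 by omega]
  | succ n ih =>
    intro j
    have key : X ^ j.toNat * X ^ (((n : ℤ) + 1 - j).toNat) * Bp n (j - 1)
        = X ^ ((((n : ℤ) + 1 + 1 - j).toNat)) * X ^ ((j - 1).toNat) * Bp n (j - 1) := by
      by_cases hj : 1 ≤ j ∧ j ≤ (n : ℤ) + 1
      · rw [← pow_add, ← pow_add]
        congr 2
        omega
      · rcases (by omega : j ≤ 0 ∨ (n : ℤ) + 1 < j) with h | h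
        · rw [Bp_neg _ _ (by omega), mul_zero, mul_zero]
        · rw [Bp_gt _ _ (by omega), mul_zero, mul_zero]
    conv_lhs => rw [Bp_succ_eq (n + 1) j, ih (j - 1), ih j]
    conv_rhs => rw [Bp_succ_eq n (j - 1), Bp_succ_eq n j]
    push_cast
    rw [show ((n : ℤ) + 1 - (j - 1)).toNat = ((n : ℤ) + 1 + 1 - j).toNat by omega]
    linear_combination key

/-- the combination rule used in the induction -/
lemma Bp_combo (m : ℕ) (s : ℤ) :
    Bp (2 * m + 2) s = X ^ ((2 * (m : ℤ) + 2 - s).toNat) * Bp (2 * m) (s - 2)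
      + (1 + X ^ (2 * m + 1)) * Bp (2 * m) (s - 1) + X ^ s.toNat * Bp (2 * m) s := by
  have key : X ^ s.toNat * X ^ ((2 * (m : ℤ) + 1 - s).toNat) * Bp (2 * m) (s - 1)
      = X ^ (2 * m + 1) * Bp (2 * m) (s - 1) := by
    by_cases hs : 1 ≤ s ∧ s ≤ 2 * (m : ℤ) + 1
    · rw [← pow_add]
      congr 2
      omega
    · rcases (by omega : s ≤ 0 ∨ 2 * (m : ℤ) + 1 < s) with h | h
      · rw [Bp_neg _ _ (by omega), mul_zero, mul_zero]
      · rw [Bp_gt _ _ (by push_cast; omega), mul_zero, mul_zero]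
  have h1 := Bp_DP (2 * m) (s - 1)
  have h2 := Bp_DP (2 * m) s
  rw [show (s - 1 - 1) = s - 2 by omega] at h1
  rw [show (2 * m + 2) = (2 * m + 1) + 1 by omega, Bp_succ_eq, h1, h2,
    show ((↑(2 * m) : ℤ) + 1 - (s - 1)).toNat = (2 * (m : ℤ) + 2 - s).toNat by push_cast; omega,
    show ((↑(2 * m) : ℤ) + 1 - s).toNat = (2 * (m : ℤ) + 1 - s).toNat by push_cast; omega]
  linear_combination key

/-! ### The theta-like sums and their recurrence -/

noncomputable def GS (w : ℤ → ℤ) (m : ℕ) : P7 :=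
  ∑ k ∈ Finset.Icc (-(m : ℤ)) (m : ℤ), ((w k : ℤ) : P7) * X ^ tN k * Bp (2 * m) ((m : ℤ) + k)

lemma GS_ext (w : ℤ → ℤ) (m : ℕ) (lo hi : ℤ) (hlo : lo ≤ -(m : ℤ)) (hhi : (m : ℤ) ≤ hi) :
    ∑ k ∈ Finset.Icc lo hi, ((w k : ℤ) : P7) * X ^ tN k * Bp (2 * m) ((m : ℤ) + k) = GS w m := by
  rw [GS]
  symm
  apply Finset.sum_subset
  · intro x hx
    simp only [Finset.mem_Icc] at *
    omega
  · intro x hx hnx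
    simp only [Finset.mem_Icc] at hx hnx
    rcases (by omega : (m : ℤ) + x < 0 ∨ (2 * (m : ℤ)) < (m : ℤ) + x) with h | h
    · rw [Bp_neg _ _ h, mul_zero]
    · rw [Bp_gt _ _ (by push_cast; omega), mul_zero]

lemma GS_rec (w : ℤ → ℤ) (m : ℕ) :
    GS w (m + 1) = (1 + X ^ (2 * m + 1)) * GS w m
      + X ^ (m + 1) * GS (fun k => w (k + 1)) m + X ^ m * GS (fun k => w (k - 1)) m := by
  have hIcc : Finset.Icc (-((m + 1 : ℕ) : ℤ)) ((m + 1 : ℕ) : ℤ)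
      = Finset.Icc (-((m : ℤ) + 1)) ((m : ℤ) + 1) := by push_cast; rfl
  rw [GS, hIcc]
  have step1 : ∀ k ∈ Finset.Icc (-((m : ℤ) + 1)) ((m : ℤ) + 1),
      ((w k : ℤ) : P7) * X ^ tN k * Bp (2 * (m + 1)) (((m + 1 : ℕ) : ℤ) + k)
      = ((1 + X ^ (2 * m + 1)) * (((w k : ℤ) : P7) * X ^ tN k * Bp (2 * m) ((m : ℤ) + k))
        + ((w k : ℤ) : P7) * X ^ (tN k + ((m : ℤ) + 1 - k).toNat) * Bp (2 * m) ((m : ℤ) + k - 1))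
        + ((w k : ℤ) : P7) * X ^ (tN k + ((m : ℤ) + 1 + k).toNat) * Bp (2 * m) ((m : ℤ) + 1 + k) := by
    intro k _
    have h2 : 2 * (m + 1) = 2 * m + 2 := by ring
    have hcast : ((m + 1 : ℕ) : ℤ) + k = (m : ℤ) + 1 + k := by push_cast; ring
    rw [h2, hcast, Bp_combo m ((m : ℤ) + 1 + k),
      show ((m : ℤ) + 1 + k - 2) = (m : ℤ) + k - 1 by ring,
      show ((m : ℤ) + 1 + k - 1) = (m : ℤ) + k by ring,
      show (2 * (m : ℤ) + 2 - ((m : ℤ) + 1 + k)) = (m : ℤ) + 1 - k by ring,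
      pow_add, pow_add]
    ring
  rw [Finset.sum_congr rfl step1, Finset.sum_add_distrib, Finset.sum_add_distrib]
  congr 1
  · congr 1
    · rw [← Finset.mul_sum]
      congr 1
      exact GS_ext w m _ _ (by omega) (by omega)
    · -- low sum : reindex k = k' + 1
      have hmap : Finset.Icc (-((m : ℤ) + 1)) ((m : ℤ) + 1)
          = (Finset.Icc (-((m : ℤ) + 2)) ((m : ℤ))).map (addRightEmbedding 1) := by
        rw [Finset.map_add_right_Icc]
        congr 1
        all_goals ring
      rw [hmap, Finset.sum_map]
      simp only [addRightEmbedding_apply]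
      have hterm : ∀ k ∈ Finset.Icc (-((m : ℤ) + 2)) ((m : ℤ)),
          ((w (k + 1) : ℤ) : P7) * X ^ (tN (k + 1) + ((m : ℤ) + 1 - (k + 1)).toNat)
              * Bp (2 * m) ((m : ℤ) + (k + 1) - 1)
          = X ^ (m + 1) * (((w (k + 1) : ℤ) : P7) * X ^ tN k * Bp (2 * m) ((m : ℤ) + k)) := by
        intro k hk
        simp only [Finset.mem_Icc] at hk
        have hexp : tN (k + 1) + ((m : ℤ) + 1 - (k + 1)).toNat = tN k + (m + 1) := by
          have h1 := tZ_succ k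
          have h2 := tZ_nonneg k
          have h3 := tZ_nonneg (k + 1)
          unfold tN
          omega
        rw [show ((m : ℤ) + (k + 1) - 1) = (m : ℤ) + k by ring, hexp, pow_add]
        ring
      rw [Finset.sum_congr rfl hterm, ← Finset.mul_sum]
      congr 1
      exact GS_ext (fun k => w (k + 1)) m _ _ (by omega) (by omega)
  · -- high sum : reindex k = k' - 1
    have hmap : Finset.Icc (-((m : ℤ) + 1)) ((m : ℤ) + 1)
        = (Finset.Icc (-(m : ℤ)) ((m : ℤ) + 2)).map (addRightEmbedding (-1)) := by
      rw [Finset.map_add_right_Icc]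
      congr 1
      all_goals ring
    rw [hmap, Finset.sum_map]
    simp only [addRightEmbedding_apply]
    have hterm : ∀ k ∈ Finset.Icc (-(m : ℤ)) ((m : ℤ) + 2),
        ((w (k + -1) : ℤ) : P7) * X ^ (tN (k + -1) + ((m : ℤ) + 1 + (k + -1)).toNat)
            * Bp (2 * m) ((m : ℤ) + 1 + (k + -1))
        = X ^ m * (((w (k - 1) : ℤ) : P7) * X ^ tN k * Bp (2 * m) ((m : ℤ) + k)) := by
      intro k hk
      simp only [Finset.mem_Icc] at hk
      have hexp : tN (k - 1) + ((m : ℤ) + 1 + (k - 1)).toNat = tN k + m := by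
        have h1 := tZ_succ (k - 1)
        rw [show (k - 1 + 1) = k by ring] at h1
        have h2 := tZ_nonneg k
        have h3 := tZ_nonneg (k - 1)
        unfold tN
        omega
      rw [show (k + -1) = k - 1 by ring, show ((m : ℤ) + 1 + (k - 1)) = (m : ℤ) + k by ring,
        show tN (k - 1) + ((m : ℤ) + k).toNat = tN (k - 1) + ((m : ℤ) + 1 + (k - 1)).toNat by
          congr 2; ring,
        hexp, pow_add]
      ring
    rw [Finset.sum_congr rfl hterm, ← Finset.mul_sum]
    congr 1
    exact GS_ext (fun k => w (k - 1)) m _ _ (by omega) (by omega)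

/-! ### U and S sums: base cases and closed forms -/

lemma GS_congr' {w1 w2 : ℤ → ℤ} (m : ℕ) (h : ∀ k, w1 k = w2 k) : GS w1 m = GS w2 m := by
  unfold GS
  exact Finset.sum_congr rfl fun k _ => by rw [h k]

lemma GS_neg (w : ℤ → ℤ) (m : ℕ) : GS (fun k => -(w k)) m = -GS w m := by
  unfold GS
  rw [← Finset.sum_neg_distrib]
  refine Finset.sum_congr rfl fun k _ => ?_
  push_cast
  ring

lemma GS_add (w1 w2 : ℤ → ℤ) (m : ℕ) :
    GS (fun k => w1 k + w2 k) m = GS w1 m + GS w2 m := by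
  unfold GS
  rw [← Finset.sum_add_distrib]
  refine Finset.sum_congr rfl fun k _ => ?_
  push_cast
  ring

lemma Bp_two_zero : Bp 2 0 = 1 := Bp_zero_right 2

lemma Bp_one_zero : Bp 1 0 = 1 := Bp_zero_right 1

lemma Bp_one_one : Bp 1 1 = 1 := by
  rw [Bp_succ_eq, Bp_zero_eq, Bp_zero_eq]
  norm_num

lemma Bp_two_one : Bp 2 1 = 1 + X := by
  rw [Bp_succ_eq, show (1:ℤ) - 1 = 0 by ring, Bp_zero_right, Bp_one_one]
  norm_num

lemma Bp_two_two : Bp 2 2 = 1 := by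
  rw [Bp_succ_eq, show (2:ℤ) - 1 = 1 by ring, Bp_one_one, Bp_gt 1 2 (by norm_num), mul_zero,
    add_zero]

lemma Icc_one : Finset.Icc (-((1:ℕ) : ℤ)) ((1:ℕ) : ℤ) = {-1, 0, 1} := by decide

lemma UU_one : GS eps 1 = 0 := by
  rw [GS, Icc_one]
  rw [Finset.sum_insert (by decide), Finset.sum_insert (by decide), Finset.sum_singleton]
  have e1 : eps (-1) = -1 := by decide
  have e2 : eps 0 = 1 := by decide
  have e3 : eps 1 = -1 := by decide
  have t1 : tN (-1) = 0 := by decide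
  have t2 : tN 0 = 0 := by decide
  have t3 : tN 1 = 1 := by decide
  rw [e1, e2, e3, t1, t2, t3]
  rw [show ((1:ℕ):ℤ) + -1 = 0 by norm_num, show ((1:ℕ):ℤ) + 0 = 1 by norm_num,
    show ((1:ℕ):ℤ) + 1 = 2 by norm_num, show (2 * 1 : ℕ) = 2 from rfl]
  rw [Bp_two_zero, Bp_two_one, Bp_two_two]
  push_cast
  ring

lemma SS_one : GS (fun k => eps k * k) 1 = 1 - X := by
  rw [GS, Icc_one]
  rw [Finset.sum_insert (by decide), Finset.sum_insert (by decide), Finset.sum_singleton]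
  have e1 : eps (-1) * (-1) = 1 := by decide
  have e2 : eps 0 * 0 = 0 := by decide
  have e3 : eps 1 * 1 = -1 := by decide
  have t1 : tN (-1) = 0 := by decide
  have t3 : tN 1 = 1 := by decide
  rw [e1, e2, e3, t1, t3]
  rw [show ((1:ℕ):ℤ) + -1 = 0 by norm_num, show ((1:ℕ):ℤ) + 0 = 1 by norm_num,
    show ((1:ℕ):ℤ) + 1 = 2 by norm_num, show (2 * 1 : ℕ) = 2 from rfl]
  rw [Bp_two_zero, Bp_two_two]
  push_cast
  ring

lemma UU_rec (m : ℕ) : GS eps (m + 1) = (1 - X ^ m) * (1 - X ^ (m + 1)) * GS eps m := by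
  rw [GS_rec]
  rw [GS_congr' m (fun k => eps_succ k), GS_congr' m (fun k => eps_pred k), GS_neg]
  ring

lemma UU_vanish : ∀ m, 1 ≤ m → GS eps m = 0 := by
  intro m hm
  induction m with
  | zero => omega
  | succ m ih =>
    rcases Nat.eq_or_lt_of_le hm with h | h
    · rw [← h] at *
      exact UU_one
    · rw [UU_rec, ih (by omega), mul_zero]

lemma SS_rec (m : ℕ) (hm : 1 ≤ m) :
    GS (fun k => eps k * k) (m + 1) = (1 - X ^ m) * (1 - X ^ (m + 1)) * GS (fun k => eps k * k) m := by
  rw [GS_rec]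
  have h1 : GS (fun k => eps (k + 1) * (k + 1)) m
      = -GS (fun k => eps k * k) m - GS eps m := by
    rw [GS_congr' m (w2 := fun k => -(eps k * k) + -(eps k))
      (fun k => by rw [eps_succ]; ring), GS_add, GS_neg, GS_neg]
    ring
  have h2 : GS (fun k => eps (k - 1) * (k - 1)) m
      = -GS (fun k => eps k * k) m + GS eps m := by
    rw [GS_congr' m (w2 := fun k => -(eps k * k) + eps k)
      (fun k => by rw [eps_pred]; ring), GS_add, GS_neg]
  rw [h1, h2, UU_vanish m hm]
  ring

lemma SS_closed : ∀ m, 1 ≤ m → GS (fun k => eps k * k) m = qq m * qq (m - 1) := by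
  intro m hm
  induction m with
  | zero => omega
  | succ m ih =>
    rcases Nat.eq_or_lt_of_le hm with h | h
    · rw [← h] at *
      rw [SS_one]
      norm_num [qq_succ, qq_zero]
    · have hm1 : 1 ≤ m := by omega
      rw [SS_rec m hm1, ih hm1]
      have hq1 : qq (m + 1) = qq m * (1 - X ^ (m + 1)) := qq_succ m
      have hq2 : qq m = qq (m - 1) * (1 - X ^ m) := by
        conv_lhs => rw [show m = (m - 1) + 1 by omega, qq_succ, show (m - 1) + 1 = m by omega]
      rw [show (m + 1 - 1) = m by omega, hq1, hq2]
      ring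

/-! ### product identity for Bp and the truncation lemma -/

lemma Bp_diag : ∀ n : ℕ, Bp n (n : ℤ) = 1 := by
  intro n
  induction n with
  | zero => rw [Nat.cast_zero, Bp_zero_right]
  | succ n ih =>
    rw [Bp_succ_eq, show ((↑(n+1) : ℤ) - 1) = (n : ℤ) by push_cast; ring, ih,
      Bp_gt n _ (by push_cast; omega), mul_zero, add_zero]

lemma Bprod : ∀ (n : ℕ) (j : ℤ), 0 ≤ j → j ≤ (n : ℤ) →
    Bp n j * (qq j.toNat * qq (((n : ℤ)) - j).toNat) = qq n := by
  intro n
  induction n with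
  | zero =>
    intro j h0 hn
    have hj : j = 0 := by exact_mod_cast le_antisymm hn h0
    subst hj
    simp [Bp_zero_eq, qq_zero]
  | succ n ih =>
    intro j h0 hn
    rcases eq_or_ne j 0 with rfl | hj0
    · rw [Bp_zero_right, Int.toNat_zero, qq_zero, show ((↑(n+1) : ℤ) - 0).toNat = n + 1 by omega]
      ring
    · rcases eq_or_ne j ((n : ℤ) + 1) with rfl | hjn
      · rw [show ((n : ℤ) + 1) = ((n + 1 : ℕ) : ℤ) by push_cast; ring, Bp_diag,
          show ((↑(n+1) : ℤ) - (↑(n+1) : ℤ)).toNat = 0 by omega, qq_zero,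
          show ((↑(n+1) : ℤ)).toNat = n + 1 by omega]
        ring
      · have h1 : 1 ≤ j := by omega
        have h2 : j ≤ (n : ℤ) := by push_cast at hn; omega
        have ih1 := ih (j - 1) (by omega) (by omega)
        have ih2 := ih j (by omega) h2
        have hq1 : qq j.toNat = qq ((j - 1).toNat) * (1 - X ^ j.toNat) := by
          conv_lhs => rw [show j.toNat = (j - 1).toNat + 1 by omega, qq_succ]
          rw [show (j - 1).toNat + 1 = j.toNat by omega]
        have hq2 : qq (((↑(n+1) : ℤ)) - j).toNat
            = qq (((n : ℤ)) - j).toNat * (1 - X ^ (((↑(n+1) : ℤ)) - j).toNat) := by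
          conv_lhs => rw [show ((↑(n+1) : ℤ) - j).toNat = ((n : ℤ) - j).toNat + 1 by push_cast; omega,
            qq_succ]
          rw [show ((n : ℤ) - j).toNat + 1 = ((↑(n+1) : ℤ) - j).toNat by push_cast; omega]
        have hkey : (X : P7) ^ j.toNat * X ^ (((↑(n+1) : ℤ)) - j).toNat = X ^ (n + 1) := by
          rw [← pow_add]
          congr 1
          push_cast
          omega
        have hih1 : Bp n (j - 1) * (qq ((j - 1).toNat) * qq (((↑(n+1) : ℤ)) - j).toNat) = qq n := by
          rw [show ((↑(n+1) : ℤ) - j) = ((n : ℤ)) - (j - 1) by push_cast; ring]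
          exact ih1
        rw [hq1] at ih2
        rw [hq2] at hih1
        rw [Bp_succ_eq, qq_succ, hq1, hq2]
        linear_combination (1 - X ^ j.toNat) * hih1
          + X ^ j.toNat * (1 - X ^ (((↑(n+1) : ℤ)) - j).toNat) * ih2 - qq n * hkey

lemma Trunc.shift {d : ℕ} {f g : P7} (h : Trunc d f g) (s : ℕ) :
    Trunc (s + d) (X ^ s * f) (X ^ s * g) := by
  intro n hn
  rw [mul_comm, Polynomial.coeff_mul_X_pow', mul_comm (X ^ s) g, Polynomial.coeff_mul_X_pow']
  split
  · exact h _ (by omega)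
  · rfl

lemma J1 (m : ℕ) (k : ℤ) (hk1 : -(m : ℤ) ≤ k) (hk2 : k ≤ (m : ℤ)) :
    Trunc (m - k.natAbs) (Bp (2 * m) ((m : ℤ) + k) * qq m) 1 := by
  set d := m - k.natAbs with hd
  have hB := Bprod (2 * m) ((m : ℤ) + k) (by omega) (by push_cast; omega)
  rw [show ((↑(2 * m) : ℤ) - ((m : ℤ) + k)).toNat = ((m : ℤ) - k).toNat by push_cast; omega] at hB
  set aN := ((m : ℤ) + k).toNat with ha
  set bN := ((m : ℤ) - k).toNat with hb
  have h2 : Trunc d (qq (2 * m) * qq m) (qq d * qq d) :=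
    (trunc_qq (le_refl d) (by omega)).mul (trunc_qq (le_refl d) (by omega))
  have h3 : Trunc d (qq aN * qq bN) (qq d * qq d) :=
    (trunc_qq (le_refl d) (by omega)).mul (trunc_qq (le_refl d) (by omega))
  have h1 : Trunc d (Bp (2 * m) ((m : ℤ) + k) * qq m * (qq aN * qq bN)) (1 * (qq aN * qq bN)) := by
    rw [one_mul, show Bp (2 * m) ((m : ℤ) + k) * qq m * (qq aN * qq bN)
      = qq (2 * m) * qq m by rw [← hB]; ring]
    exact h2.trans h3.symm
  exact Trunc.cancel (by rw [Polynomial.mul_coeff_zero, qq_coeff_zero, qq_coeff_zero, mul_one]) h1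

/-! ### pairing and the truncated Jacobi identity -/

noncomputable def jsum (M : ℕ) : P7 :=
  ∑ j ∈ Finset.range M, ((eps (j : ℤ) * (2 * (j : ℤ) + 1) : ℤ) : P7) * X ^ (j * (j + 1) / 2)

lemma tN_cast (j : ℕ) : tN (j : ℤ) = j * (j + 1) / 2 := by
  have hZ := tZ_double (j : ℤ)
  have hS : ((j : ℤ) * ((j : ℤ) + 1)) = ((j * (j + 1) : ℕ) : ℤ) := by push_cast; ring
  rw [hS] at hZ
  obtain ⟨w, hw⟩ := Nat.even_mul_succ_self j
  have hnn := tZ_nonneg (j : ℤ)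
  unfold tN
  omega

lemma pairing (m : ℕ) (hm : 1 ≤ m) :
    ∑ k ∈ Finset.Icc (-(m : ℤ)) (m : ℤ), ((eps k * k : ℤ) : P7) * X ^ tN k
      = jsum m + ((eps (m : ℤ) * (m : ℤ) : ℤ) : P7) * X ^ tN (m : ℤ) := by
  have hsplit : Finset.Icc (-(m : ℤ)) (m : ℤ)
      = Finset.Icc (-(m : ℤ)) (-1) ∪ Finset.Icc 0 (m : ℤ) := by
    ext x
    simp only [Finset.mem_Icc, Finset.mem_union]
    omega
  rw [hsplit, Finset.sum_union (by
    rw [Finset.disjoint_left]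
    intro x h1 h2
    simp only [Finset.mem_Icc] at h1 h2
    omega)]
  have hneg : ∑ k ∈ Finset.Icc (-(m : ℤ)) (-1), ((eps k * k : ℤ) : P7) * X ^ tN k
      = ∑ j ∈ Finset.Icc (0 : ℤ) ((m : ℤ) - 1), ((eps j * (j + 1) : ℤ) : P7) * X ^ tN j := by
    apply Finset.sum_nbij' (i := fun k => -(k + 1)) (j := fun j => -(j + 1))
    · intro a ha
      simp only [Finset.mem_Icc] at *
      omega
    · intro a ha
      simp only [Finset.mem_Icc] at *
      omega
    · intro a _
      ring
    · intro a _
      ring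
    · intro a ha
      have h1 : eps (-(a + 1)) = -eps a := eps_negpair a
      have h2 : tN (-(a + 1)) = tN a := by unfold tN; rw [tZ_negpair]
      rw [h1, h2, show (-(a + 1) + 1) = -a by ring]
      push_cast
      ring
  rw [hneg]
  have hpos : Finset.Icc (0 : ℤ) (m : ℤ) = insert (m : ℤ) (Finset.Icc 0 ((m : ℤ) - 1)) := by
    ext x
    simp only [Finset.mem_Icc, Finset.mem_insert]
    omega
  rw [hpos, Finset.sum_insert (by simp only [Finset.mem_Icc]; omega)]
  refine (show ∀ (A B L J : P7), A + B = J → A + (L + B) = J + L from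
    fun A B L J h => by rw [← h]; ring) _ _ _ _ ?_
  rw [← Finset.sum_add_distrib]
  have hcomb : ∀ j ∈ Finset.Icc (0 : ℤ) ((m : ℤ) - 1),
      ((eps j * (j + 1) : ℤ) : P7) * X ^ tN j + ((eps j * j : ℤ) : P7) * X ^ tN j
        = ((eps j * (2 * j + 1) : ℤ) : P7) * X ^ tN j := by
    intro j _
    push_cast
    ring
  rw [Finset.sum_congr rfl hcomb, jsum]
  apply Finset.sum_nbij' (i := fun j : ℤ => j.toNat) (j := fun j : ℕ => (j : ℤ))
  · intro a ha
    simp only [Finset.mem_Icc] at ha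
    simp only [Finset.mem_range]
    omega
  · intro a ha
    simp only [Finset.mem_range] at ha
    simp only [Finset.mem_Icc]
    omega
  · intro a ha
    simp only [Finset.mem_Icc] at ha
    omega
  · intro a _
    simp
  · intro a ha
    simp only [Finset.mem_Icc] at ha
    have hc : ((a.toNat : ℕ) : ℤ) = a := Int.toNat_of_nonneg ha.1
    conv_lhs => rw [← hc]
    rw [tN_cast]

lemma JAC (K : ℕ) : Trunc K ((qq K) ^ 3) (jsum (K + 1)) := by
  set m := K + 1 with hmdef
  have hm : 1 ≤ m := by omega
  have hSq : GS (fun k => eps k * k) m * qq m = qq m * qq (m - 1) * qq m := by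
    rw [SS_closed m hm]
  rw [GS, Finset.sum_mul] at hSq
  have hterm : ∀ k ∈ Finset.Icc (-(m : ℤ)) (m : ℤ),
      Trunc (m - 1) (((eps k * k : ℤ) : P7) * X ^ tN k * Bp (2 * m) ((m : ℤ) + k) * qq m)
        (((eps k * k : ℤ) : P7) * X ^ tN k) := by
    intro k hk
    simp only [Finset.mem_Icc] at hk
    have hJ := J1 m k hk.1 hk.2
    have hsh := hJ.shift (tN k)
    have hc := (Trunc.refl (tN k + (m - k.natAbs)) (((eps k * k : ℤ) : P7))).mul hsh
    have hge : m - 1 ≤ tN k + (m - k.natAbs) := by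
      have h1 := tZ_ge k
      have h2 := tZ_nonneg k
      unfold tN
      omega
    have hc2 := hc.mono hge
    have e1 : ((eps k * k : ℤ) : P7) * (X ^ tN k * (Bp (2 * m) ((m : ℤ) + k) * qq m))
        = ((eps k * k : ℤ) : P7) * X ^ tN k * Bp (2 * m) ((m : ℤ) + k) * qq m := by ring
    have e2 : ((eps k * k : ℤ) : P7) * (X ^ tN k * 1) = ((eps k * k : ℤ) : P7) * X ^ tN k := by
      ring
    rwa [e1, e2] at hc2
  have hsum := Trunc.sum _ _ _ hterm
  rw [hSq] at hsum
  rw [pairing m hm] at hsum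
  have hlast : Trunc (m - 1) (((eps (m : ℤ) * (m : ℤ) : ℤ) : P7) * X ^ tN (m : ℤ)) 0 := by
    apply trunc_monomial_high _ ⟨eps (m : ℤ) * (m : ℤ), rfl⟩
    have hd := tZ_double (m : ℤ)
    have hm' : (1 : ℤ) ≤ (m : ℤ) := by exact_mod_cast hm
    have hc : (m : ℤ) * ((m : ℤ) + 1) ≥ 2 * (m : ℤ) := by nlinarith [hm']
    unfold tN
    omega
  have hdrop := hsum.trans ((Trunc.refl (m - 1) (jsum m)).add hlast)
  rw [add_zero] at hdrop
  have hq3 : Trunc K (qq K ^ 3) (qq m * qq (m - 1) * qq m) := by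
    have h1 : Trunc K (qq K) (qq K) := Trunc.refl _ _
    have h2 : Trunc K (qq m) (qq K) := trunc_qq le_rfl (by omega)
    have h3 : Trunc K (qq (m - 1)) (qq K) := trunc_qq le_rfl (by omega)
    have := (h2.mul h3).mul h2
    have hpow : qq K ^ 3 = qq K * qq K * qq K := by ring
    rw [hpow]
    exact this.symm
  have hm1 : m - 1 = K := by omega
  rw [hm1] at hdrop
  exact hq3.trans hdrop

/-! ### the mod 7 vanishing on class 5 -/

lemma tri_core (u v k : ℕ) (hk : k % 7 = 5) (huv : u * (u + 1) / 2 + v * (v + 1) / 2 = k) :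
    ((eps (u : ℤ) * (2 * (u : ℤ) + 1) : ℤ) : R7) * ((eps (v : ℤ) * (2 * (v : ℤ) + 1) : ℤ) : R7)
      = 0 := by
  obtain ⟨qu, ru, hru, rfl⟩ : ∃ q r, r < 7 ∧ u = 7 * q + r :=
    ⟨u / 7, u % 7, Nat.mod_lt _ (by norm_num), by omega⟩
  obtain ⟨qv, rv, hrv, rfl⟩ : ∃ q r, r < 7 ∧ v = 7 * q + r :=
    ⟨v / 7, v % 7, Nat.mod_lt _ (by norm_num), by omega⟩
  have h2u : 2 * ((7 * qu + ru) * ((7 * qu + ru) + 1) / 2) = (7 * qu + ru) * ((7 * qu + ru) + 1) := by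
    obtain ⟨w, hw⟩ := Nat.even_mul_succ_self (7 * qu + ru)
    omega
  have h2v : 2 * ((7 * qv + rv) * ((7 * qv + rv) + 1) / 2) = (7 * qv + rv) * ((7 * qv + rv) + 1) := by
    obtain ⟨w, hw⟩ := Nat.even_mul_succ_self (7 * qv + rv)
    omega
  have hXu : (7 * qu + ru) * ((7 * qu + ru) + 1)
      = 7 * (7 * qu * qu + 2 * qu * ru + qu) + ru * (ru + 1) := by ring
  have hXv : (7 * qv + rv) * ((7 * qv + rv) + 1)
      = 7 * (7 * qv * qv + 2 * qv * rv + qv) + rv * (rv + 1) := by ring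
  have hr33 : ru = 3 ∧ rv = 3 := by
    interval_cases ru <;> interval_cases rv <;> omega
  rw [Int.cast_mul, Int.cast_mul]
  have hz : ((2 * ((7 * qu + ru : ℕ) : ℤ) + 1 : ℤ) : R7) = 0 := by
    rw [ZMod.intCast_zmod_eq_zero_iff_dvd]
    refine ⟨2 * (qu : ℤ) + 1, ?_⟩
    push_cast
    rw [hr33.1]
    push_cast
    ring
  rw [hz]
  ring

lemma e6class5' (K k : ℕ) (hkK : k ≤ K) (hk : k % 7 = 5) : ((qq K) ^ 6).coeff k = 0 := by
  have hJ := JAC K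
  have h6 : Trunc K ((qq K) ^ 6) (jsum (K + 1) * jsum (K + 1)) := by
    have := hJ.mul hJ
    have hpow : qq K ^ 6 = qq K ^ 3 * (qq K ^ 3) := by ring
    rw [hpow]
    exact this
  rw [h6 k hkK]
  rw [jsum, Finset.sum_mul_sum, Polynomial.finset_sum_coeff]
  apply Finset.sum_eq_zero
  intro u _
  rw [Polynomial.finset_sum_coeff]
  apply Finset.sum_eq_zero
  intro v _
  have hre : ((eps (u : ℤ) * (2 * (u : ℤ) + 1) : ℤ) : P7) * X ^ (u * (u + 1) / 2)
        * (((eps (v : ℤ) * (2 * (v : ℤ) + 1) : ℤ) : P7) * X ^ (v * (v + 1) / 2))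
      = ((eps (u : ℤ) * (2 * (u : ℤ) + 1) * (eps (v : ℤ) * (2 * (v : ℤ) + 1)) : ℤ) : P7)
        * X ^ (u * (u + 1) / 2 + v * (v + 1) / 2) := by
    rw [pow_add]
    push_cast
    ring
  rw [hre, ← Polynomial.C_eq_intCast, Polynomial.coeff_C_mul, Polynomial.coeff_X_pow]
  by_cases he : k = u * (u + 1) / 2 + v * (v + 1) / 2
  · rw [if_pos he, mul_one, Int.cast_mul]
    exact tri_core u v k hk he.symm
  · rw [if_neg he, mul_zero]
/-! ### Computable reflection via lists -/

/-- Horner-style interpretation of a coefficient list -/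
noncomputable def toP : List R7 → P7
  | [] => 0
  | c :: t => Polynomial.C c + X * toP t

lemma toP_coeff (l : List R7) (n : ℕ) : (toP l).coeff n = l.getD n 0 := by
  induction l generalizing n with
  | nil => simp [toP]
  | cons c t ih =>
    cases n with
    | zero => simp [toP, coeff_add, Polynomial.coeff_C]
    | succ n => simp [toP, coeff_add, Polynomial.coeff_C, Polynomial.coeff_X_mul, ih]

def ladd : List R7 → List R7 → List R7
  | [], b => b
  | a, [] => a
  | x :: xs, y :: ys => (x + y) :: ladd xs ys

lemma toP_ladd (a b : List R7) : toP (ladd a b) = toP a + toP b := by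
  induction a generalizing b with
  | nil => cases b <;> simp [ladd, toP]
  | cons x xs ih =>
    cases b with
    | nil => simp [ladd, toP]
    | cons y ys => simp [ladd, toP, ih]; ring

def lneg (a : List R7) : List R7 := a.map (fun x => -x)

lemma toP_lneg (a : List R7) : toP (lneg a) = -toP a := by
  induction a with
  | nil => simp [lneg, toP]
  | cons x xs ih => simp [lneg, toP] at ih ⊢; rw [ih]; ring

def lsub (a b : List R7) : List R7 := ladd a (lneg b)

lemma toP_lsub (a b : List R7) : toP (lsub a b) = toP a - toP b := by
  rw [lsub, toP_ladd, toP_lneg]; ring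

def lmono (d : ℕ) : List R7 := List.replicate d 0 ++ [1]

lemma toP_lmono (d : ℕ) : toP (lmono d) = X ^ d := by
  induction d with
  | zero => simp [lmono, toP]
  | succ d ih => simp [lmono, toP, List.replicate_succ] at ih ⊢; rw [ih]; ring

def lone : List R7 := [1]

lemma toP_lone : toP lone = 1 := by simp [lone, toP]

/-- truncated multiplication of coefficient lists up to degree C -/
def lmul (C : ℕ) (a b : List R7) : List R7 :=
  (List.range (C + 1)).map (fun n => ∑ i ∈ Finset.range (n + 1), a.getD i 0 * b.getD (n - i) 0)

lemma trunc_lmul (C : ℕ) (a b : List R7) : Trunc C (toP (lmul C a b)) (toP a * toP b) := by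
  intro n hn
  rw [toP_coeff, coeff_mul, Finset.Nat.sum_antidiagonal_eq_sum_range_succ_mk]
  rw [lmul, List.getD_eq_getElem?_getD, List.getElem?_map]
  rw [List.getElem?_range (by omega)]
  simp only [Option.map_some, Option.getD_some]
  exact Finset.sum_congr rfl fun i _ => by rw [toP_coeff, toP_coeff]

def lpow (C : ℕ) (l : List R7) : ℕ → List R7
  | 0 => lone
  | k + 1 => lmul C l (lpow C l k)

lemma trunc_lpow (C : ℕ) (l : List R7) (k : ℕ) : Trunc C (toP (lpow C l k)) ((toP l) ^ k) := by
  induction k with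
  | zero => rw [lpow, toP_lone, pow_zero]; exact Trunc.refl _ _
  | succ k ih =>
    rw [lpow, pow_succ]
    exact (trunc_lmul C l (lpow C l k)).trans (((Trunc.refl C (toP l)).mul ih).trans
      (by rw [mul_comm]; exact Trunc.refl _ _))

/-- list for (1 - X^m) -/
def lqfac (m : ℕ) : List R7 := lsub lone (lmono m)

/-- list model of qq -/
def lqq (C : ℕ) : ℕ → List R7
  | 0 => lone
  | K + 1 => lmul C (lqq C K) (lqfac (K + 1))

lemma trunc_lqq (C K : ℕ) : Trunc C (toP (lqq C K)) (qq K) := by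
  induction K with
  | zero => rw [lqq, toP_lone, qq_zero]; exact Trunc.refl _ _
  | succ K ih =>
    rw [lqq, qq_succ]
    refine (trunc_lmul C _ _).trans (Trunc.mul ih ?_)
    rw [lqfac, toP_lsub, toP_lone, toP_lmono]
    exact Trunc.refl _ _

/-- coefficient of (qq K)^6 at k, for k ≤ K, via reflection -/
lemma coeff_qq6_eq (K k : ℕ) (h : k ≤ K) :
    ((qq K) ^ 6).coeff k = (lpow k (lqq k k) 6).getD k 0 := by
  have h1 : Trunc k ((qq K) ^ 6) ((qq k) ^ 6) := (trunc_qq le_rfl h).pow 6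
  have h2 : Trunc k (toP (lpow k (lqq k k) 6)) ((qq k) ^ 6) :=
    (trunc_lpow k (lqq k k) 6).trans ((trunc_lqq k k).pow 6)
  rw [h1 k le_rfl, ← h2 k le_rfl, toP_coeff]

set_option maxRecDepth 10000 in
example : (lpow 4 (lqq 4 4) 6).getD 4 0 = 5 := by decide
set_option maxRecDepth 10000 in
example : (lpow 6 (lqq 6 6) 6).getD 6 0 = 4 := by decide
/-! ### The two-factor product Q and its reflection -/

variable (N : ℕ)

/-- ∏_{m=1}^{K} (1-X^m)(1-X^{Nm}) over ZMod 7 -/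
noncomputable def Qp (N K : ℕ) : P7 := ∏ m ∈ Finset.Icc 1 K, ((1 - X ^ m) * (1 - X ^ (N * m)))

lemma Qp_zero : Qp N 0 = 1 := by simp [Qp]

lemma Qp_succ (K : ℕ) : Qp N (K + 1) = Qp N K * ((1 - X ^ (K + 1)) * (1 - X ^ (N * (K + 1)))) := by
  rw [Qp, Qp, ← Finset.prod_Icc_succ_top (by omega)]

def lQfac (N m : ℕ) : List R7 :=
  lsub (ladd lone (lmono (m + N * m))) (ladd (lmono m) (lmono (N * m)))

lemma toP_lQfac (N m : ℕ) : toP (lQfac N m) = (1 - X ^ m) * (1 - X ^ (N * m)) := by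
  rw [lQfac, toP_lsub, toP_ladd, toP_ladd, toP_lone, toP_lmono, toP_lmono, toP_lmono, pow_add]
  ring

def lQ (C N : ℕ) : ℕ → List R7
  | 0 => lone
  | K + 1 => lmul C (lQ C N K) (lQfac N (K + 1))

lemma trunc_lQ (C N K : ℕ) : Trunc C (toP (lQ C N K)) (Qp N K) := by
  induction K with
  | zero => rw [lQ, toP_lone, Qp_zero]; exact Trunc.refl _ _
  | succ K ih =>
    rw [lQ, Qp_succ]
    refine (trunc_lmul C _ _).trans (Trunc.mul ih ?_)
    rw [toP_lQfac]; exact Trunc.refl _ _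

lemma coeff_Qp6_eq (N k : ℕ) :
    ((Qp N k) ^ 6).coeff k = (lpow k (lQ k N k) 6).getD k 0 := by
  have h2 : Trunc k (toP (lpow k (lQ k N k) 6)) ((Qp N k) ^ 6) :=
    (trunc_lpow k (lQ k N k) 6).trans ((trunc_lQ k N k).pow 6)
  rw [← h2 k le_rfl, toP_coeff]

set_option maxRecDepth 40000 in
example : (lpow 12 (lQ 12 6 12) 6).getD 12 0 = 6 := by decide
/-! ### From the hypothesis to the key vanishing statement -/

section Star

variable {N : ℕ} {c : ℕ → ℤ} {a : ℕ}

local notation "φ" => Int.castRingHom R7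

/-- extension of hc to all truncation levels K ≥ n -/
lemma hc_ext (hN : 1 ≤ N)
    (hc : ∀ n : ℕ, PowerSeries.coeff (R := ℤ) n ((PowerSeries.mk c) *
        ∏ m ∈ Finset.Icc 1 n, ((1 - PowerSeries.X ^ m) * (1 - PowerSeries.X ^ (N * m)))) =
      if n = 0 then 1 else 0) :
    ∀ K n, n ≤ K → PowerSeries.coeff (R := ℤ) n ((PowerSeries.mk c) *
        ∏ m ∈ Finset.Icc 1 K, ((1 - PowerSeries.X ^ m) * (1 - PowerSeries.X ^ (N * m)))) =
      if n = 0 then 1 else 0 := by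
  intro K
  induction K with
  | zero => intro n hn; interval_cases n; exact hc 0
  | succ K ih =>
    intro n hn
    rcases Nat.eq_or_lt_of_le hn with h | h
    · subst h; exact hc (K + 1)
    · have hn' : n ≤ K := by omega
      rw [Finset.prod_Icc_succ_top (by omega : 1 ≤ K + 1)]
      set Pr : PowerSeries ℤ := ∏ m ∈ Finset.Icc 1 K,
          ((1 - PowerSeries.X ^ m) * (1 - PowerSeries.X ^ (N * m))) with hPr
      have hexp : (PowerSeries.mk c) * (Pr * ((1 - PowerSeries.X ^ (K+1)) *
            (1 - PowerSeries.X ^ (N * (K+1)))))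
          = PowerSeries.mk c * Pr - (PowerSeries.mk c * Pr) * PowerSeries.X ^ (K+1)
            - (PowerSeries.mk c * Pr) * PowerSeries.X ^ (N*(K+1))
            + (PowerSeries.mk c * Pr) * PowerSeries.X ^ ((K+1) + N*(K+1)) := by
        rw [pow_add]; ring
      rw [hexp]
      simp only [map_sub, map_add]
      rw [PowerSeries.coeff_mul_X_pow', PowerSeries.coeff_mul_X_pow', PowerSeries.coeff_mul_X_pow']
      rw [if_neg (by omega), if_neg (by nlinarith), if_neg (by nlinarith)]
      simpa using ih n hn'

/-- the reduced sequence mod 7 -/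
noncomputable def gam (c : ℕ → ℤ) : PowerSeries R7 := PowerSeries.mk (fun n => ((c n : ℤ) : R7))

lemma L1' (hN : 1 ≤ N)
    (hc : ∀ n : ℕ, PowerSeries.coeff (R := ℤ) n ((PowerSeries.mk c) *
        ∏ m ∈ Finset.Icc 1 n, ((1 - PowerSeries.X ^ m) * (1 - PowerSeries.X ^ (N * m)))) =
      if n = 0 then 1 else 0) :
    ∀ K n, n ≤ K → PowerSeries.coeff (R := R7) n (gam c * (Qp N K : PowerSeries R7)) =
      if n = 0 then 1 else 0 := by
  intro K n hn
  have h := hc_ext hN hc K n hn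
  have hmap := congrArg φ h
  rw [← PowerSeries.coeff_map] at hmap
  have hQ : ((Qp N K : P7) : PowerSeries R7)
      = ∏ m ∈ Finset.Icc 1 K, ((1 - PowerSeries.X ^ m) * (1 - PowerSeries.X ^ (N * m))) := by
    rw [Qp, ← Polynomial.coeToPowerSeries.ringHom_apply, map_prod]
    refine Finset.prod_congr rfl fun m _ => ?_
    simp [Polynomial.coeToPowerSeries.ringHom_apply, Polynomial.coe_mul, Polynomial.coe_sub,
      Polynomial.coe_pow, Polynomial.coe_one, Polynomial.coe_X]
  have heq : (PowerSeries.map φ) ((PowerSeries.mk c) *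
      ∏ m ∈ Finset.Icc 1 K, ((1 - PowerSeries.X ^ m) * (1 - PowerSeries.X ^ (N * m))))
      = gam c * (Qp N K : PowerSeries R7) := by
    rw [map_mul, map_prod, hQ]
    congr 1
    · ext j; simp [gam, PowerSeries.coeff_map, PowerSeries.coeff_mk]
  rw [heq] at hmap
  rw [hmap]
  split <;> simp

/-- multiplying a truncated-δ series leaves coefficients unchanged -/
lemma L2 {F : PowerSeries R7} {K : ℕ}
    (hF : ∀ n ≤ K, PowerSeries.coeff (R := R7) n F = if n = 0 then 1 else 0)
    (g : PowerSeries R7) : ∀ n ≤ K, PowerSeries.coeff (R := R7) n (F * g) = PowerSeries.coeff (R := R7) n g := by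
  intro n hn
  rw [PowerSeries.coeff_mul]
  rw [Finset.sum_eq_single_of_mem (0, n) (by simp)]
  · rw [hF 0 (by omega), if_pos rfl, one_mul]
  · intro p hp hne
    rw [Finset.HasAntidiagonal.mem_antidiagonal] at hp
    have h1 : p.1 ≠ 0 := by
      intro h0
      apply hne
      have : p.2 = n := by omega
      rw [← h0, ← this]
    rw [hF p.1 (by omega), if_neg h1, zero_mul]

lemma frob (f : P7) : f ^ 7 = Polynomial.expand R7 7 f := by
  haveI : Fact (Nat.Prime 7) := ⟨by norm_num⟩
  have h := Polynomial.map_frobenius_expand 7 f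
  rw [ZMod.frobenius_zmod, Polynomial.map_id] at h
  exact h.symm

/-- THE KEY CONSEQUENCE: all coefficients of (Qp N k)^6 in class a (mod 7) vanish -/
lemma star (hN : 1 ≤ N) (ha : a ≤ 6)
    (hc : ∀ n : ℕ, PowerSeries.coeff (R := ℤ) n ((PowerSeries.mk c) *
        ∏ m ∈ Finset.Icc 1 n, ((1 - PowerSeries.X ^ m) * (1 - PowerSeries.X ^ (N * m)))) =
      if n = 0 then 1 else 0)
    (hcong : ∀ n : ℕ, (7 : ℤ) ∣ c (7 * n + a)) :
    ∀ k, k % 7 = a → ((Qp N k) ^ 6).coeff k = 0 := by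
  intro k hk
  have hL1 := L1' hN hc k
  -- first evaluation : via L2
  have hB : PowerSeries.coeff (R := R7) k (gam c * ((Polynomial.expand R7 7 (Qp N k) : P7) : PowerSeries R7))
      = ((Qp N k) ^ 6).coeff k := by
    rw [← frob, pow_succ, mul_comm ((Qp N k)^6) (Qp N k), Polynomial.coe_mul, ← mul_assoc]
    rw [L2 hL1 _ k le_rfl]
    exact Polynomial.coeff_coe _ _
  -- second evaluation : termwise zero
  have hC : PowerSeries.coeff (R := R7) k (gam c * ((Polynomial.expand R7 7 (Qp N k) : P7) : PowerSeries R7))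
      = 0 := by
    rw [PowerSeries.coeff_mul]
    refine Finset.sum_eq_zero fun p hp => ?_
    rw [Finset.HasAntidiagonal.mem_antidiagonal] at hp
    rw [Polynomial.coeff_coe, Polynomial.coeff_expand (by norm_num : 0 < 7)]
    by_cases h7 : 7 ∣ p.2
    · have hp1 : p.1 % 7 = a := by omega
      have : p.1 = 7 * (p.1 / 7) + a := by omega
      obtain ⟨d, hd⟩ := hcong (p.1 / 7)
      have hg : PowerSeries.coeff (R := R7) p.1 (gam c) = 0 := by
        rw [gam, PowerSeries.coeff_mk, this, hd]
        rw [Int.cast_mul, (by decide : ((7:ℤ) : R7) = 0), zero_mul]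
      rw [hg, zero_mul]
    · rw [if_neg h7, mul_zero]
  rw [← hB, hC]

end Star
/-! ### Witness computations -/

lemma Qp_split (N K : ℕ) : Qp N K = qq K * (Polynomial.expand R7 N (qq K)) := by
  rw [Qp, Finset.prod_mul_distrib]
  congr 1
  rw [qq, map_prod]
  refine Finset.prod_congr rfl fun m _ => ?_
  rw [map_sub, map_one, map_pow, Polynomial.expand_X, ← pow_mul]

lemma Qp6_split (N K : ℕ) :
    (Qp N K) ^ 6 = (qq K) ^ 6 * (Polynomial.expand R7 N ((qq K) ^ 6)) := by
  rw [Qp_split, mul_pow, map_pow]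

lemma coeff0_pow6 (K : ℕ) : ((qq K) ^ 6).coeff 0 = 1 := by
  rw [← Polynomial.constantCoeff_apply, map_pow, Polynomial.constantCoeff_apply,
    qq_coeff_zero, one_pow]

/-- For N ≥ 7 and k = a ≤ 6 the expand-factor is invisible. -/
lemma witness1 {N a : ℕ} (hN7 : 7 ≤ N) (ha : a ≤ 6) :
    ((Qp N a) ^ 6).coeff a = ((qq a) ^ 6).coeff a := by
  rw [Qp6_split]
  have ht : Trunc a (Polynomial.expand R7 N ((qq a) ^ 6)) 1 := by
    intro n hn
    rw [Polynomial.coeff_expand (by omega : 0 < N), Polynomial.coeff_one]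
    by_cases h : N ∣ n
    · obtain ⟨t, rfl⟩ := h
      have ht0 : t = 0 := by
        rcases Nat.eq_zero_or_pos t with rfl | htp
        · rfl
        · have : N ≤ N * t := Nat.le_mul_of_pos_right N htp
          omega
      subst ht0
      simp [coeff0_pow6]
    · have hn0 : n ≠ 0 := by rintro rfl; exact h ⟨0, rfl⟩
      rw [if_neg h, if_neg hn0]
  have := (Trunc.refl a ((qq a) ^ 6)).mul ht
  rw [this a le_rfl, mul_one]

/-- For N ≥ 7, k = N + b with b ≤ 6. -/
lemma witness2 {N b : ℕ} (hN7 : 7 ≤ N) (hb : b ≤ 6) :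
    ((Qp N (N + b)) ^ 6).coeff (N + b)
      = ((qq (N + b)) ^ 6).coeff (N + b) + ((qq b) ^ 6).coeff b := by
  set k := N + b with hk
  rw [Qp6_split, Polynomial.coeff_mul]
  set F := (qq k) ^ 6 with hF
  have hsub : ({(k, 0), (b, N)} : Finset (ℕ × ℕ)) ⊆ Finset.HasAntidiagonal.antidiagonal k := by
    intro p hp
    simp only [Finset.mem_insert, Finset.mem_singleton] at hp
    rcases hp with rfl | rfl <;> simp [Finset.HasAntidiagonal.mem_antidiagonal] <;> omega
  have hvan : ∀ p ∈ Finset.HasAntidiagonal.antidiagonal k, p ∉ ({(k, 0), (b, N)} : Finset (ℕ × ℕ)) →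
      F.coeff p.1 * (Polynomial.expand R7 N F).coeff p.2 = 0 := by
    intro p hp hnot
    rw [Finset.HasAntidiagonal.mem_antidiagonal] at hp
    rw [Polynomial.coeff_expand (by omega : 0 < N)]
    by_cases h : N ∣ p.2
    · obtain ⟨t, hT⟩ := h
      exfalso
      apply hnot
      have hT2 : t ≤ 1 := by
        by_contra htg
        have : 2 * N ≤ N * t := by nlinarith
        omega
      interval_cases t
      · simp only [Finset.mem_insert, Finset.mem_singleton]
        left
        have : p.2 = 0 := by omega
        have : p.1 = k := by omega
        cases p; simp_all
      · simp only [Finset.mem_insert, Finset.mem_singleton]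
        right
        have h2 : p.2 = N := by omega
        have h1 : p.1 = b := by omega
        cases p; simp_all
    · rw [if_neg h, mul_zero]
  rw [← Finset.sum_subset hsub hvan]
  rw [Finset.sum_pair (by simp; omega)]
  have e0 : (Polynomial.expand R7 N F).coeff 0 = 1 := by
    rw [Polynomial.coeff_expand (by omega : 0 < N), if_pos ⟨0, rfl⟩, Nat.zero_div, hF, coeff0_pow6]
  have eN : (Polynomial.expand R7 N F).coeff N = 1 := by
    rw [Polynomial.coeff_expand (by omega : 0 < N), if_pos ⟨1, (mul_one N).symm⟩,
      Nat.div_self (by omega : 0 < N), hF]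
    rw [coeff_qq6_eq k 1 (by omega)]
    decide
  have eb : F.coeff b = ((qq b) ^ 6).coeff b := by
    rw [hF, ((trunc_qq (le_refl b) (by omega : b ≤ k)).pow 6) b le_rfl]
  rw [e0, eN, eb, mul_one, mul_one]

/-- Jacobi-based vanishing : to be proved below -/
lemma e6class5 (K k : ℕ) (hkK : k ≤ K) (hk : k % 7 = 5) : ((qq K) ^ 6).coeff k = 0 :=
  e6class5' K k hkK hk

lemma smallwit (N k : ℕ) (h : ((Qp N k) ^ 6).coeff k = 0)
    (hd : (lpow k (lQ k N k) 6).getD k 0 ≠ 0) : False := by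
  rw [coeff_Qp6_eq] at h
  exact hd h

end CN7

set_option maxRecDepth 100000 in
/-- For `N > 1`, `0 ≤ a ≤ 6` and `c_N(n)` defined by
`∑ c_N(n) qⁿ = ∏_{n≥1} 1/((1 - qⁿ)(1 - q^{N n}))` in `ℤ[[q]]`:
if `c_N(7n + a) ≡ 0 (mod 7)` for all `n ≥ 0`, then `N ≡ 0 (mod 7)` and `a = 5`. -/
theorem cN_congruence_mod_seven_necessary
    (N : ℕ) (hN : 1 < N) (c : ℕ → ℤ)
    (hc : ∀ n : ℕ, PowerSeries.coeff (R := ℤ) n ((PowerSeries.mk c) *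
        ∏ m ∈ Finset.Icc 1 n, ((1 - PowerSeries.X ^ m) * (1 - PowerSeries.X ^ (N * m)))) =
      if n = 0 then 1 else 0)
    (a : ℕ) (ha : a ≤ 6)
    (hcong : ∀ n : ℕ, (7 : ℤ) ∣ c (7 * n + a)) :
    N % 7 = 0 ∧ a = 5 := by
  have hstar := CN7.star (by omega : 1 ≤ N) ha hc hcong
  rcases le_or_gt N 6 with hsmall | hbig
  · exfalso
    interval_cases N <;> interval_cases a <;>
      first
        | exact CN7.smallwit _ 0 (hstar 0 (by decide)) (by decide)
        | exact CN7.smallwit _ 1 (hstar 1 (by decide)) (by decide)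
        | exact CN7.smallwit _ 2 (hstar 2 (by decide)) (by decide)
        | exact CN7.smallwit _ 3 (hstar 3 (by decide)) (by decide)
        | exact CN7.smallwit _ 4 (hstar 4 (by decide)) (by decide)
        | exact CN7.smallwit _ 5 (hstar 5 (by decide)) (by decide)
        | exact CN7.smallwit _ 6 (hstar 6 (by decide)) (by decide)
        | exact CN7.smallwit _ 12 (hstar 12 (by decide)) (by decide)
  · have hN7 : 7 ≤ N := by omega
    have ha5 : a = 5 := by
      by_contra hne
      rcases Nat.eq_zero_or_pos a with rfl | hapos
      · have h := hstar 0 rfl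
        rw [CN7.Qp_zero, one_pow] at h
        simp only [Polynomial.coeff_one, if_pos rfl] at h
        exact absurd h (by decide)
      · have h := hstar a (Nat.mod_eq_of_lt (by omega))
        rw [CN7.witness1 hN7 ha] at h
        rw [CN7.coeff_qq6_eq a a le_rfl] at h
        interval_cases a
        · exact absurd h (by decide)
        · exact absurd h (by decide)
        · exact absurd h (by decide)
        · exact absurd h (by decide)
        · exact hne rfl
        · exact absurd h (by decide)
    subst ha5
    refine ⟨?_, rfl⟩
    by_contra hr
    set b := (12 - N % 7) % 7 with hb
    have hbprop : b ≤ 6 ∧ b ≠ 5 := by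
      constructor <;> omega
    have hk7 : (N + b) % 7 = 5 := by omega
    have h := hstar (N + b) hk7
    rw [CN7.witness2 hN7 hbprop.1] at h
    rw [CN7.e6class5 (N + b) (N + b) le_rfl hk7, zero_add] at h
    rw [CN7.coeff_qq6_eq b b le_rfl] at h
    have hall : ∀ b' : ℕ, b' ≤ 6 → b' ≠ 5 →
        (CN7.lpow b' (CN7.lqq b' b') 6).getD b' 0 ≠ 0 := by decide
    exact hall b hbprop.1 hbprop.2 h
end

section
/- Let N > 1 be an integer, ℓ a prime dividing N, and 0 ≤ a ≤ ℓ-1. Then c_N(ℓn + a) ≡ 0 (mod ℓ) for all integers n ≥ 0 if and only if p(ℓn + a) ≡ 0 (mod ℓ) for all integers n ≥ 0. -/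
open PowerSeries Finset
namespace CNAux
noncomputable section
open scoped Classical
variable {α : Type*}
universe u
variable {ι : Type u}
/-- A convenience constructor for the power series whose coefficients indicate a subset. -/
def indicatorSeries (α : Type*) [Semiring α] (s : Set ℕ) : PowerSeries α :=
  PowerSeries.mk fun n => if n ∈ s then 1 else 0

theorem coeff_indicator (s : Set ℕ) [Semiring α] (n : ℕ) :
    coeff (R := α) n (indicatorSeries _ s) = if n ∈ s then 1 else 0 :=
  coeff_mk _ _

-- The main workhorse of the partition theorem proof.
theorem partialGF_prop (α : Type*) [CommSemiring α] (n : ℕ) (s : Finset ℕ) (hs : ∀ i ∈ s, 0 < i)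
    (c : ℕ → Set ℕ) (hc : ∀ i, i ∉ s → 0 ∈ c i) :
    #{p : n.Partition | (∀ j, p.parts.count j ∈ c j) ∧ ∀ j ∈ p.parts, j ∈ s} =
      coeff (R := α) n (∏ i ∈ s, indicatorSeries α ((· * i) '' c i)) := by
  simp_rw [coeff_prod, coeff_indicator, prod_boole, sum_boole]
  apply congr_arg
  simp only [mem_univ, forall_true_left, not_and, not_forall, exists_prop,
    Set.mem_image, not_exists]
  set φ : (a : Nat.Partition n) →
    a ∈ filter (fun p ↦ (∀ (j : ℕ), Multiset.count j p.parts ∈ c j) ∧ ∀ j ∈ p.parts, j ∈ s) univ →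
    ℕ →₀ ℕ := fun p _ => {
      toFun := fun i => Multiset.count i p.parts • i
      support := Finset.filter (fun i => i ≠ 0) p.parts.toFinset
      mem_support_toFun := fun a => by
        simp only [smul_eq_mul, ne_eq, mul_eq_zero, Multiset.count_eq_zero]
        rw [not_or, not_not]
        simp only [Multiset.mem_toFinset, not_not, mem_filter] }
  refine Finset.card_bij φ ?_ ?_ ?_
  · intro a ha
    simp only [φ, not_forall, not_exists, not_and, exists_prop, mem_filter]
    rw [mem_finsuppAntidiag]
    dsimp only [ne_eq, smul_eq_mul, id_eq, eq_mpr_eq_cast, le_eq_subset, Finsupp.coe_mk]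
    simp only [mem_univ, forall_true_left, not_and, not_forall, exists_prop,
      mem_filter, true_and] at ha
    refine ⟨⟨?_, fun i ↦ ?_⟩, fun i _ ↦ ⟨a.parts.count i, ha.1 i, rfl⟩⟩
    · conv_rhs => simp [← a.parts_sum]
      rw [sum_multiset_count_of_subset _ s]
      · simp only [smul_eq_mul]
      · intro i
        simp only [Multiset.mem_toFinset, not_not, mem_filter]
        apply ha.2
    · simp only [ne_eq, Multiset.mem_toFinset, not_not, mem_filter, and_imp]
      exact fun hi _ ↦ ha.2 i hi
  · intro p₁ hp₁ p₂ hp₂ h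
    apply Nat.Partition.ext
    simp only [true_and, mem_univ, mem_filter] at hp₁ hp₂
    ext i
    simp only [φ, ne_eq, Multiset.mem_toFinset, not_not, smul_eq_mul, Finsupp.mk.injEq] at h
    by_cases hi : i = 0
    · rw [hi]
      rw [Multiset.count_eq_zero_of_notMem]
      · rw [Multiset.count_eq_zero_of_notMem]
        intro a; exact Nat.lt_irrefl 0 (hs 0 (hp₂.2 0 a))
      intro a; exact Nat.lt_irrefl 0 (hs 0 (hp₁.2 0 a))
    · rw [← mul_left_inj' hi]
      rw [funext_iff] at h
      exact h.2 i
  · simp only [φ, mem_filter, mem_finsuppAntidiag, mem_univ, exists_prop, true_and, and_assoc]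
    rintro f ⟨hf, hf₃, hf₄⟩
    have hf' : f ∈ finsuppAntidiag s n := mem_finsuppAntidiag.mpr ⟨hf, hf₃⟩
    simp only [mem_finsuppAntidiag] at hf'
    refine ⟨⟨∑ i ∈ s, Multiset.replicate (f i / i) i, ?_, ?_⟩, ?_, ?_, ?_⟩
    · intro i hi
      simp only [exists_prop, Multiset.mem_sum, mem_map, Function.Embedding.coeFn_mk] at hi
      rcases hi with ⟨t, ht, z⟩
      apply hs
      rwa [Multiset.eq_of_mem_replicate z]
    · simp_rw [Multiset.sum_sum, Multiset.sum_replicate, Nat.nsmul_eq_mul]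
      rw [← hf'.1]
      refine sum_congr rfl fun i hi => Nat.div_mul_cancel ?_
      rcases hf₄ i hi with ⟨w, _, hw₂⟩
      rw [← hw₂]
      exact dvd_mul_left _ _
    · intro i
      simp_rw [Multiset.count_sum', Multiset.count_replicate, sum_ite_eq']
      split_ifs with h
      · rcases hf₄ i h with ⟨w, hw₁, hw₂⟩
        rwa [← hw₂, Nat.mul_div_cancel _ (hs i h)]
      · exact hc _ h
    · intro i hi
      rw [Multiset.mem_sum] at hi
      rcases hi with ⟨j, hj₁, hj₂⟩
      rwa [Multiset.eq_of_mem_replicate hj₂]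
    · ext i
      simp_rw [Multiset.count_sum', Multiset.count_replicate, sum_ite_eq']
      simp only [ne_eq, Multiset.mem_toFinset, not_not, smul_eq_mul, ite_mul,
        zero_mul, Finsupp.coe_mk]
      split_ifs with h
      · apply Nat.div_mul_cancel
        rcases hf₄ i h with ⟨w, _, hw₂⟩
        apply Dvd.intro_left _ hw₂
      · apply symm
        rw [← Finsupp.notMem_support_iff]
        exact notMem_mono hf'.2 h



/-- Integer partition function. -/
def pZ (n : ℕ) : ℤ := (Fintype.card (Nat.Partition n) : ℤ)

theorem ind_mul_one_sub (i : ℕ) (hi : 0 < i) :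
    (indicatorSeries ℤ {m | i ∣ m}) * (1 - X ^ i) = 1 := by
  ext k
  rw [mul_sub, mul_one, map_sub, coeff_mul_X_pow', coeff_indicator, coeff_one]
  by_cases h : i ≤ k
  · rw [if_pos h, coeff_indicator]
    have h2 : i ∣ k ↔ i ∣ k - i := by
      constructor
      · intro hd; exact (Nat.dvd_sub hd dvd_rfl)
      · intro hd
        have : k = (k - i) + i := by omega
        rw [this]; exact Nat.dvd_add hd dvd_rfl
    have hk0 : ¬ k = 0 := by omega
    simp only [Set.mem_setOf_eq, if_neg hk0]
    simp only [h2]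
    split_ifs <;> simp
  · rw [if_neg h]
    have : i ∣ k ↔ k = 0 := by
      constructor
      · intro hd; by_contra h0
        exact h (Nat.le_of_dvd (Nat.pos_of_ne_zero h0) hd)
      · rintro rfl; exact dvd_zero i
    simp only [Set.mem_setOf_eq, this, sub_zero]

theorem prod_ind_mul (s : Finset ℕ) (hs : ∀ i ∈ s, 0 < i) :
    (∏ i ∈ s, indicatorSeries ℤ {m | i ∣ m}) * (∏ i ∈ s, (1 - X ^ i)) = 1 := by
  rw [← Finset.prod_mul_distrib]
  rw [Finset.prod_congr rfl fun i hi => ind_mul_one_sub i (hs i hi)]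
  exact Finset.prod_const_one

theorem card_eq_coeff (n : ℕ) (s : Finset ℕ) (hs : ∀ i ∈ s, 0 < i) :
    (#{p : n.Partition | ∀ j ∈ p.parts, j ∈ s} : ℤ) =
      coeff (R := ℤ) n (∏ i ∈ s, indicatorSeries ℤ {m | i ∣ m}) := by
  convert partialGF_prop ℤ n s hs (fun _ => Set.univ) (fun _ _ => trivial) using 2
  · congr 1
  · congr 1
    apply Finset.filter_congr
    intro p _
    constructor
    · intro h; exact ⟨fun _ => trivial, h⟩
    · intro h; exact h.2
  · apply Finset.prod_congr rfl
    intro i _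
    have hset : ((fun t => t * i) '' Set.univ) = {m | i ∣ m} := by
      rw [Set.image_univ]
      ext m
      simp only [Set.mem_range, Set.mem_setOf_eq, dvd_iff_exists_eq_mul_left]
      exact ⟨fun ⟨y, hy⟩ => ⟨y, hy.symm⟩, fun ⟨y, hy⟩ => ⟨y, hy.symm⟩⟩
    rw [hset]

theorem card_parts_all (j n : ℕ) (hj : j ≤ n) :
    #{p : j.Partition | ∀ t ∈ p.parts, t ∈ Finset.Icc 1 n} =
      Fintype.card (Nat.Partition j) := by
  rw [← Finset.card_univ]
  congr 1
  apply Finset.filter_true_of_mem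
  intro p _ t ht
  have h1 : 0 < t := p.parts_pos ht
  have h2 : t ≤ j := by
    simpa [p.parts_sum] using Multiset.single_le_sum (fun _ _ => Nat.zero_le _) _ ht
  rw [Finset.mem_Icc]
  omega

theorem coeff_p_prod (n k : ℕ) (hk : k ≤ n) :
    coeff (R := ℤ) k (PowerSeries.mk pZ * ∏ m ∈ Finset.Icc 1 n, (1 - X ^ m)) =
      if k = 0 then 1 else 0 := by
  have hpos : ∀ i ∈ Finset.Icc 1 n, 0 < i := fun i hi => by
    rw [Finset.mem_Icc] at hi; omega
  have key : coeff (R := ℤ) k (PowerSeries.mk pZ * ∏ m ∈ Finset.Icc 1 n, (1 - X ^ m)) =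
      coeff (R := ℤ) k ((∏ i ∈ Finset.Icc 1 n, indicatorSeries ℤ {m | i ∣ m}) *
        ∏ m ∈ Finset.Icc 1 n, (1 - X ^ m)) := by
    rw [coeff_mul, coeff_mul]
    apply Finset.sum_congr rfl
    rintro ⟨i, j⟩ hij
    rw [Finset.HasAntidiagonal.mem_antidiagonal] at hij
    congr 1
    rw [coeff_mk, ← card_eq_coeff _ _ hpos, card_parts_all i n (by omega), pZ]
  rw [key, prod_ind_mul _ hpos, coeff_one]

def mulP (N j : ℕ) (hN : 0 < N) (hdvd : N ∣ j) (q : Nat.Partition (j / N)) :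
    Nat.Partition j where
  parts := q.parts.map (N * ·)
  parts_pos := fun ht => by
    obtain ⟨x, hx, rfl⟩ := Multiset.mem_map.mp ht
    exact Nat.mul_pos hN (q.parts_pos hx)
  parts_sum := by
    have h2 : (q.parts.map (N * ·)).sum = N * q.parts.sum := by
      simpa using Multiset.sum_map_mul_left (s := q.parts) (a := N) (f := id)
    rw [h2, q.parts_sum, Nat.mul_div_cancel' hdvd]

theorem divP_map_eq (N j : ℕ) (p : Nat.Partition j) (h : ∀ t ∈ p.parts, N ∣ t) :
    (p.parts.map (· / N)).map (N * ·) = p.parts := by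
  rw [Multiset.map_map]
  calc p.parts.map ((N * ·) ∘ (· / N))
      = p.parts.map id := Multiset.map_congr rfl fun t ht => Nat.mul_div_cancel' (h t ht)
    _ = p.parts := Multiset.map_id _

def divP (N j : ℕ) (hN : 0 < N) (p : Nat.Partition j) (h : ∀ t ∈ p.parts, N ∣ t) :
    Nat.Partition (j / N) where
  parts := p.parts.map (· / N)
  parts_pos := fun ht => by
    obtain ⟨x, hx, rfl⟩ := Multiset.mem_map.mp ht
    exact Nat.div_pos (Nat.le_of_dvd (p.parts_pos hx) (h x hx)) hN
  parts_sum := by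
    have h1 : (p.parts.map fun t => N * (t / N)).sum = N * (p.parts.map (· / N)).sum :=
      Multiset.sum_map_mul_left
    have h2 : p.parts.map (fun t => N * (t / N)) = p.parts :=
      (Multiset.map_congr rfl fun t ht => Nat.mul_div_cancel' (h t ht)).trans
        (Multiset.map_id _)
    have h3 : j = N * (p.parts.map (· / N)).sum := by
      rw [← h1, h2, p.parts_sum]
    exact (Nat.div_eq_of_eq_mul_left hN (h3.trans (mul_comm _ _))).symm

theorem card_dvd_parts (N j : ℕ) (hN : 0 < N) (hdvd : N ∣ j) :
    (Finset.univ.filter fun p : Nat.Partition j => ∀ t ∈ p.parts, N ∣ t).card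
      = Fintype.card (Nat.Partition (j / N)) := by
  rw [← Finset.card_univ]
  refine Finset.card_bij'
    (fun p hp => divP N j hN p (by simpa using (Finset.mem_filter.mp hp).2))
    (fun q _ => mulP N j hN hdvd q) (fun p hp => Finset.mem_univ _) ?_ ?_ ?_
  · intro q hq
    rw [Finset.mem_filter]
    refine ⟨Finset.mem_univ _, fun t ht => ?_⟩
    obtain ⟨x, hx, rfl⟩ := Multiset.mem_map.mp ht
    exact dvd_mul_right N x
  · intro p hp
    apply Nat.Partition.ext
    exact divP_map_eq N j p (by simpa using (Finset.mem_filter.mp hp).2)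
  · intro q hq
    apply Nat.Partition.ext
    show (q.parts.map (N * ·)).map (· / N) = q.parts
    rw [Multiset.map_map]
    calc q.parts.map ((· / N) ∘ (N * ·))
        = q.parts.map id := Multiset.map_congr rfl fun t _ => Nat.mul_div_cancel_left t hN
      _ = q.parts := Multiset.map_id _

theorem card_parts_mulN (N j n : ℕ) (hN : 0 < N) (hj : j ≤ n) :
    (#{p : j.Partition | ∀ t ∈ p.parts, t ∈ (Finset.Icc 1 n).image (fun x => N * x)} : ℤ) =
      if N ∣ j then pZ (j / N) else 0 := by
  have hfil : (Finset.filter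
        (fun p : j.Partition => ∀ t ∈ p.parts, t ∈ (Finset.Icc 1 n).image (fun x => N * x))
        Finset.univ) =
      Finset.filter (fun p : j.Partition => ∀ t ∈ p.parts, N ∣ t) Finset.univ := by
    apply Finset.ext
    intro p
    simp only [Finset.mem_filter, Finset.mem_univ, true_and]
    constructor
    · intro h t ht
      obtain ⟨x, _, rfl⟩ := Finset.mem_image.mp (h t ht)
      exact dvd_mul_right N x
    · intro h t ht
      have h1 : 0 < t := p.parts_pos ht
      have h2 : t ≤ j := by
        simpa [p.parts_sum] using Multiset.single_le_sum (fun _ _ => Nat.zero_le _) _ ht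
      obtain ⟨x, rfl⟩ := h t ht
      refine Finset.mem_image.mpr ⟨x, Finset.mem_Icc.mpr ⟨?_, ?_⟩, rfl⟩
      · by_contra h0; push_neg at h0; interval_cases x <;> omega
      · calc x ≤ N * x := Nat.le_mul_of_pos_left x hN
          _ ≤ n := by omega
  rw [show (#{p : j.Partition | ∀ t ∈ p.parts, t ∈ (Finset.Icc 1 n).image (fun x => N * x)})
      = (Finset.filter (fun p : j.Partition => ∀ t ∈ p.parts, N ∣ t) Finset.univ).card
      from congrArg Finset.card hfil]
  split_ifs with hdvd
  · rw [card_dvd_parts N j hN hdvd, pZ]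
  · norm_cast
    rw [Finset.card_eq_zero, Finset.filter_eq_empty_iff]
    intro p _
    intro hall
    apply hdvd
    rw [← p.parts_sum]
    exact Multiset.dvd_sum fun t ht => hall t ht

/-- `SN N j` = `p(j/N)` if `N ∣ j`, else `0`. -/
def SN (N j : ℕ) : ℤ := if N ∣ j then pZ (j / N) else 0

theorem SN_def (N j : ℕ) : SN N j = if N ∣ j then pZ (j / N) else 0 := rfl

theorem coeff_p_prodN (N n k : ℕ) (hN : 0 < N) (hk : k ≤ n) :
    coeff (R := ℤ) k (PowerSeries.mk (SN N) *
      ∏ m ∈ Finset.Icc 1 n, (1 - X ^ (N * m))) = if k = 0 then 1 else 0 := by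
  have hinj : ∀ x ∈ Finset.Icc 1 n, ∀ y ∈ Finset.Icc 1 n,
      (fun x => N * x) x = (fun x => N * x) y → x = y := fun x _ y _ h =>
    Nat.eq_of_mul_eq_mul_left hN h
  have hspos : ∀ i ∈ (Finset.Icc 1 n).image (fun x => N * x), 0 < i := by
    intro i hi
    obtain ⟨x, hx, rfl⟩ := Finset.mem_image.mp hi
    rw [Finset.mem_Icc] at hx
    exact Nat.mul_pos hN (by omega)
  have hprod : (∏ m ∈ Finset.Icc 1 n, (1 - (X : PowerSeries ℤ) ^ (N * m))) =
      ∏ i ∈ (Finset.Icc 1 n).image (fun x => N * x), (1 - X ^ i) :=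
    (Finset.prod_image (g := fun x => N * x)
      (f := fun i => 1 - (X : PowerSeries ℤ) ^ i) hinj).symm
  have key : coeff (R := ℤ) k (PowerSeries.mk (SN N) *
      ∏ m ∈ Finset.Icc 1 n, (1 - X ^ (N * m))) =
      coeff (R := ℤ) k ((∏ i ∈ (Finset.Icc 1 n).image (fun x => N * x),
        indicatorSeries ℤ {m | i ∣ m}) * ∏ m ∈ Finset.Icc 1 n, (1 - X ^ (N * m))) := by
    rw [coeff_mul, coeff_mul]
    apply Finset.sum_congr rfl
    rintro ⟨i, j⟩ hij
    rw [Finset.HasAntidiagonal.mem_antidiagonal] at hij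
    congr 1
    rw [coeff_mk, ← card_eq_coeff _ _ hspos, card_parts_mulN N i n hN (by omega), SN_def]
  rw [key, hprod, prod_ind_mul _ hspos, coeff_one]

/-- The convolution `D N M = ∑ p(u) SN(v)` over `u + v = M`. -/
def DD (N M : ℕ) : ℤ := ∑ x ∈ Finset.HasAntidiagonal.antidiagonal M, pZ x.1 * SN N x.2

theorem DD_def (N M : ℕ) :
    DD N M = ∑ x ∈ Finset.HasAntidiagonal.antidiagonal M, pZ x.1 * SN N x.2 := rfl

theorem mk_DD (N : ℕ) :
    PowerSeries.mk (DD N) = PowerSeries.mk pZ * PowerSeries.mk (SN N) := by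
  ext M
  rw [coeff_mk, coeff_mul, DD]
  apply Finset.sum_congr rfl
  rintro ⟨i, j⟩ _
  rw [coeff_mk, coeff_mk]

theorem DD_prop (N : ℕ) (hN : 0 < N) (M : ℕ) :
    coeff (R := ℤ) M (PowerSeries.mk (DD N) *
      ∏ m ∈ Finset.Icc 1 M, ((1 - X ^ m) * (1 - X ^ (N * m)))) =
      if M = 0 then 1 else 0 := by
  rw [mk_DD, Finset.prod_mul_distrib]
  have hring : PowerSeries.mk pZ * PowerSeries.mk (SN N) *
      ((∏ m ∈ Finset.Icc 1 M, (1 - (X : PowerSeries ℤ) ^ m)) *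
        ∏ m ∈ Finset.Icc 1 M, (1 - X ^ (N * m)))
      = (PowerSeries.mk pZ * ∏ m ∈ Finset.Icc 1 M, (1 - X ^ m)) *
        (PowerSeries.mk (SN N) * ∏ m ∈ Finset.Icc 1 M, (1 - X ^ (N * m))) := by ring
  rw [hring, coeff_mul]
  have step : ∀ x ∈ Finset.HasAntidiagonal.antidiagonal M,
      (coeff (R := ℤ) x.1) (PowerSeries.mk pZ * ∏ m ∈ Finset.Icc 1 M, (1 - X ^ m)) *
        (coeff (R := ℤ) x.2) (PowerSeries.mk (SN N) * ∏ m ∈ Finset.Icc 1 M, (1 - X ^ (N * m)))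
      = if x = ((0 : ℕ), (0 : ℕ)) then 1 else 0 := by
    rintro ⟨i, j⟩ hij
    rw [Finset.HasAntidiagonal.mem_antidiagonal] at hij
    rw [coeff_p_prod M i (by omega), coeff_p_prodN N M j hN (by omega)]
    by_cases hi : i = 0 <;> by_cases hj : j = 0 <;>
      simp [hi, hj, Prod.ext_iff]
  rw [Finset.sum_congr rfl step,
    Finset.sum_ite_eq' (Finset.HasAntidiagonal.antidiagonal M) ((0 : ℕ), (0 : ℕ)) (fun _ => (1 : ℤ))]
  simp [Finset.HasAntidiagonal.mem_antidiagonal, eq_comm]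

theorem arith_split (ℓ a : ℕ) (ha : a < ℓ) (n u v : ℕ)
    (huv : u + v = ℓ * n + a) (hv : ℓ ∣ v) :
    ∃ m, u = ℓ * m + a ∧ (v ≠ 0 → m < n) := by
  obtain ⟨w, rfl⟩ := hv
  have hw : w < n + 1 := by
    apply Nat.lt_of_mul_lt_mul_left (a := ℓ)
    rw [Nat.mul_add, Nat.mul_one]
    omega
  obtain ⟨d, rfl⟩ := Nat.exists_eq_add_of_le (show w ≤ n by omega)
  refine ⟨d, ?_, ?_⟩
  · have hmul : ℓ * (w + d) = ℓ * w + ℓ * d := Nat.mul_add ℓ w d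
    omega
  · intro hv0
    have hw1 : 1 ≤ w := by
      rcases Nat.eq_zero_or_pos w with h | h
      · subst h; simp at hv0
      · exact h
    omega

theorem pZ_zero : pZ 0 = 1 := by
  rw [pZ]
  norm_cast

theorem c_eq_DD (N : ℕ) (hN0 : 0 < N) (c : ℕ → ℤ)
    (hc : ∀ n : ℕ, PowerSeries.coeff (R := ℤ) n ((PowerSeries.mk c) *
        ∏ m ∈ Finset.Icc 1 n, ((1 - PowerSeries.X ^ m) * (1 - PowerSeries.X ^ (N * m)))) =
      if n = 0 then 1 else 0) :
    ∀ M, c M = DD N M := by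
  intro M
  induction M using Nat.strong_induction_on with
  | _ M ih =>
    have h0 : PowerSeries.coeff (R := ℤ) M ((PowerSeries.mk c - PowerSeries.mk (DD N)) *
        ∏ m ∈ Finset.Icc 1 M,
          ((1 - PowerSeries.X ^ m) * (1 - PowerSeries.X ^ (N * m)))) = 0 := by
      rw [sub_mul, map_sub, hc M, DD_prop N hN0 M, sub_self]
    rw [PowerSeries.coeff_mul,
      Finset.sum_eq_single ((M : ℕ), (0 : ℕ))] at h0
    · have hconst : PowerSeries.coeff (R := ℤ) 0 (∏ m ∈ Finset.Icc 1 M,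
          ((1 - PowerSeries.X ^ m) * (1 - PowerSeries.X ^ (N * m))) : PowerSeries ℤ) = 1 := by
        rw [PowerSeries.coeff_zero_eq_constantCoeff, map_prod]
        apply Finset.prod_eq_one
        intro m hm
        rw [Finset.mem_Icc] at hm
        have hm1 : m ≠ 0 := by omega
        have hm2 : N * m ≠ 0 := by positivity
        simp [hm1, hm2, zero_pow]
      rw [hconst, mul_one, map_sub, PowerSeries.coeff_mk, PowerSeries.coeff_mk] at h0
      exact sub_eq_zero.mp h0
    · rintro ⟨i, j⟩ hb hbne
      rw [Finset.HasAntidiagonal.mem_antidiagonal] at hb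
      simp only [ne_eq, Prod.mk.injEq, not_and] at hbne
      have hi : i < M := by
        rcases Nat.lt_or_ge i M with h | h
        · exact h
        · exfalso; exact hbne (by omega) (by omega)
      rw [map_sub, PowerSeries.coeff_mk, PowerSeries.coeff_mk, ih i hi, sub_self, zero_mul]
    · intro hM
      exact absurd (Finset.HasAntidiagonal.mem_antidiagonal.mpr (by omega)) hM

theorem mp_dir (N : ℕ) (hN0 : 0 < N) (ℓ : ℕ) (hℓN : ℓ ∣ N) (a : ℕ) (haℓ : a < ℓ)
    (c : ℕ → ℤ) (hcD : ∀ M, c M = DD N M)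
    (h : ∀ n : ℕ, (ℓ : ℤ) ∣ c (ℓ * n + a)) :
    ∀ n : ℕ, ℓ ∣ Fintype.card (Nat.Partition (ℓ * n + a)) := by
  intro n
  induction n using Nat.strong_induction_on with
  | _ n ih =>
    have hcM : (ℓ : ℤ) ∣ DD N (ℓ * n + a) := by rw [← hcD]; exact h n
    have hmem : ((ℓ * n + a : ℕ), (0 : ℕ)) ∈ Finset.HasAntidiagonal.antidiagonal (ℓ * n + a) := by simp
    have hsplit : pZ (ℓ * n + a) * SN N 0 +
        ∑ x ∈ (Finset.HasAntidiagonal.antidiagonal (ℓ * n + a)).erase ((ℓ * n + a : ℕ), (0 : ℕ)),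
          pZ x.1 * SN N x.2
        = ∑ x ∈ Finset.HasAntidiagonal.antidiagonal (ℓ * n + a), pZ x.1 * SN N x.2 := by
      have h' := Finset.add_sum_erase (Finset.HasAntidiagonal.antidiagonal (ℓ * n + a))
        (fun x : ℕ × ℕ => pZ x.1 * SN N x.2) hmem
      simp only at h'
      exact h'
    have hSN0 : SN N 0 = 1 := by
      rw [SN_def, if_pos (dvd_zero N), Nat.zero_div, pZ_zero]
    have hrest : ∀ x ∈ (Finset.HasAntidiagonal.antidiagonal (ℓ * n + a)).erase ((ℓ * n + a : ℕ), (0 : ℕ)),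
        (ℓ : ℤ) ∣ pZ x.1 * SN N x.2 := by
      rintro ⟨u, v⟩ hx
      rw [Finset.mem_erase, Finset.HasAntidiagonal.mem_antidiagonal] at hx
      by_cases hdv : N ∣ v
      · have hlv : ℓ ∣ v := dvd_trans hℓN hdv
        obtain ⟨m, hu, hlt⟩ := arith_split ℓ a haℓ n u v hx.2 hlv
        have hvne : v ≠ 0 := by
          intro h0
          apply hx.1
          simp only [Prod.mk.injEq]
          omega
        have hdvp : (ℓ : ℤ) ∣ pZ u := by
          rw [hu, pZ]
          exact_mod_cast Int.natCast_dvd_natCast.mpr (ih m (hlt hvne))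
        exact dvd_mul_of_dvd_left hdvp _
      · simp [SN_def, hdv]
    have hpZ : pZ (ℓ * n + a) = DD N (ℓ * n + a) -
        ∑ x ∈ (Finset.HasAntidiagonal.antidiagonal (ℓ * n + a)).erase ((ℓ * n + a : ℕ), (0 : ℕ)),
          pZ x.1 * SN N x.2 := by
      rw [DD_def, ← hsplit, hSN0, mul_one]
      ring
    have hfin : (ℓ : ℤ) ∣ pZ (ℓ * n + a) := by
      rw [hpZ]
      exact dvd_sub hcM (Finset.dvd_sum hrest)
    rw [pZ] at hfin
    exact_mod_cast hfin

theorem mpr_dir (N : ℕ) (ℓ : ℕ) (hℓN : ℓ ∣ N) (a : ℕ) (haℓ : a < ℓ)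
    (c : ℕ → ℤ) (hcD : ∀ M, c M = DD N M)
    (hp : ∀ n : ℕ, ℓ ∣ Fintype.card (Nat.Partition (ℓ * n + a))) :
    ∀ n : ℕ, (ℓ : ℤ) ∣ c (ℓ * n + a) := by
  intro n
  rw [hcD, DD_def]
  apply Finset.dvd_sum
  rintro ⟨u, v⟩ hx
  rw [Finset.HasAntidiagonal.mem_antidiagonal] at hx
  by_cases hdv : N ∣ v
  · have hlv : ℓ ∣ v := dvd_trans hℓN hdv
    obtain ⟨m, hu, -⟩ := arith_split ℓ a haℓ n u v hx hlv
    have hdvp : (ℓ : ℤ) ∣ pZ u := by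
      rw [hu, pZ]
      exact_mod_cast Int.natCast_dvd_natCast.mpr (hp m)
    exact dvd_mul_of_dvd_left hdvp _
  · simp [SN_def, hdv]

end
end CNAux

/-- For `N > 1`, a prime `ℓ` dividing `N`, `0 ≤ a ≤ ℓ - 1`, and `c_N(n)`
defined by `∑ c_N(n) qⁿ = ∏_{n≥1} 1/((1 - qⁿ)(1 - q^{N n}))` in `ℤ[[q]]`:
`c_N(ℓ n + a) ≡ 0 (mod ℓ)` for all `n ≥ 0` if and only if `p(ℓ n + a) ≡ 0 (mod ℓ)` for all
`n ≥ 0`, where `p(n) = Fintype.card (Nat.Partition n)` is the partition function. -/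
theorem cN_congruence_iff_partition_congruence
    (N : ℕ) (hN : 1 < N) (c : ℕ → ℤ)
    (hc : ∀ n : ℕ, PowerSeries.coeff (R := ℤ) n ((PowerSeries.mk c) *
        ∏ m ∈ Finset.Icc 1 n, ((1 - PowerSeries.X ^ m) * (1 - PowerSeries.X ^ (N * m)))) =
      if n = 0 then 1 else 0)
    (ℓ : ℕ) (hℓ : ℓ.Prime) (hℓN : ℓ ∣ N) (a : ℕ) (ha : a ≤ ℓ - 1) :
    (∀ n : ℕ, (ℓ : ℤ) ∣ c (ℓ * n + a)) ↔
      (∀ n : ℕ, ℓ ∣ Fintype.card (Nat.Partition (ℓ * n + a))) := by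
  have hN0 : 0 < N := by omega
  have haℓ : a < ℓ := by have := hℓ.two_le; omega
  have hcD := CNAux.c_eq_DD N hN0 c hc
  exact ⟨fun h => CNAux.mp_dir N hN0 ℓ hℓN a haℓ c hcD h,
    fun hp => CNAux.mpr_dir N ℓ hℓN a haℓ c hcD hp⟩
end

section
/- Let j be a positive integer and a_1, …, a_j positive integers, define c(n) by ∑_{n≥0} c(n) q^n = ∏_{n≥1} ∏_{i=1}^{j} 1/(1-q^{a_i n}) and N = lcm(a_1, …, a_j). Let ℓ > max(5, j+3) be a prime with ℓ ∤ N, and let a, b ∈ {0, 1, …, ℓ-1} satisfy 24a ≡ 24b + (a_1 + ⋯ + a_j) (mod ℓ). Define d(n) by ∑_{n≥0} d(n) q^n = ∏_{i=1}^{j} ( q^{a_i} ∏_{n≥1} (1-q^{a_i n})^{24} )^{(ℓ²-1)/24} in ℤ[[q]]. Then c(ℓn + a) ≡ 0 (mod ℓ) for all integers n ≥ 0 if and only if d(ℓn + b) ≡ 0 (mod ℓ) for all integers n ≥ 0. -/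
open PowerSeries Finset

namespace CongrAux

variable {R : Type*} [CommRing R]

/-- coefficients up to `n` agree with those of `1` -/
def LowOne (n : ℕ) (u : PowerSeries R) : Prop :=
  ∀ t ≤ n, PowerSeries.coeff t u = if t = 0 then 1 else 0

lemma lowOne_one (n : ℕ) : LowOne n (1 : PowerSeries R) :=
  fun t _ => coeff_one t

lemma lowOne_mul {n : ℕ} {u v : PowerSeries R} (hu : LowOne n u) (hv : LowOne n v) :
    LowOne n (u * v) := by
  intro t ht
  rw [coeff_mul]
  rcases Nat.eq_zero_or_pos t with rfl | hpos
  · simp [hu 0 ht, hv 0 ht]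
  · rw [if_neg hpos.ne']
    apply Finset.sum_eq_zero
    rintro ⟨p, q⟩ hpq
    have hm : p + q = t := Finset.HasAntidiagonal.mem_antidiagonal.mp hpq
    rcases Nat.eq_zero_or_pos q with rfl | hq
    · rw [hu p (by omega), if_neg (by omega), zero_mul]
    · rw [hv q (by omega), if_neg hq.ne', mul_zero]

lemma lowOne_one_sub_X_pow {n e : ℕ} (h : n < e) : LowOne n (1 - X ^ e : PowerSeries R) := by
  intro t ht
  rw [map_sub, coeff_one, coeff_X_pow, if_neg (show ¬ t = e by omega), sub_zero]

lemma lowOne_prod {n : ℕ} {ι : Type*} (s : Finset ι) (f : ι → PowerSeries R)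
    (h : ∀ i ∈ s, LowOne n (f i)) : LowOne n (∏ i ∈ s, f i) :=
  Finset.prod_induction f (LowOne n) (fun _ _ => lowOne_mul) (lowOne_one n) h

lemma lowOne_pow {n : ℕ} {u : PowerSeries R} (h : LowOne n u) (k : ℕ) : LowOne n (u ^ k) := by
  induction k with
  | zero => simpa using lowOne_one n
  | succ k ih => rw [pow_succ]; exact lowOne_mul ih h

lemma coeff_mul_lowOne {n : ℕ} {u : PowerSeries R} (hu : LowOne n u) (P : PowerSeries R) :
    coeff n (P * u) = coeff n P := by
  rw [coeff_mul, Finset.sum_eq_single_of_mem (n, 0)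
      (Finset.HasAntidiagonal.mem_antidiagonal.mpr (add_zero n))]
  · rw [hu 0 (Nat.zero_le n), if_pos rfl, mul_one]
  · rintro ⟨p, q⟩ hpq hne
    have hm : p + q = n := Finset.HasAntidiagonal.mem_antidiagonal.mp hpq
    have hq : q ≠ 0 := by
      rintro rfl
      exact hne (by rw [Prod.mk.injEq]; exact ⟨by omega, rfl⟩)
    rw [hu q (by omega), if_neg hq, mul_zero]

/-- all coefficients supported on multiples of `k` -/
def MulSupp (k : ℕ) (u : PowerSeries R) : Prop :=
  ∀ t : ℕ, ¬ k ∣ t → PowerSeries.coeff t u = 0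

lemma mulSupp_one (k : ℕ) : MulSupp k (1 : PowerSeries R) := by
  intro t ht
  rw [coeff_one, if_neg]
  rintro rfl
  exact ht (dvd_zero k)

lemma mulSupp_mul {k : ℕ} {u v : PowerSeries R} (hu : MulSupp k u) (hv : MulSupp k v) :
    MulSupp k (u * v) := by
  intro t ht
  rw [coeff_mul]
  apply Finset.sum_eq_zero
  rintro ⟨p, q⟩ hpq
  have hm : p + q = t := Finset.HasAntidiagonal.mem_antidiagonal.mp hpq
  by_cases hp : k ∣ p
  · have hq : ¬ k ∣ q := fun hq => ht (hm ▸ dvd_add hp hq)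
    rw [hv q hq, mul_zero]
  · rw [hu p hp, zero_mul]

lemma mulSupp_prod {k : ℕ} {ι : Type*} (s : Finset ι) (f : ι → PowerSeries R)
    (h : ∀ i ∈ s, MulSupp k (f i)) : MulSupp k (∏ i ∈ s, f i) :=
  Finset.prod_induction f (MulSupp k) (fun _ _ => mulSupp_mul) (mulSupp_one k) h

lemma mulSupp_one_sub_X_pow (k e : ℕ) : MulSupp k (1 - X ^ (k * e) : PowerSeries R) := by
  intro t ht
  rw [map_sub, coeff_one, coeff_X_pow, if_neg (by rintro rfl; exact ht (dvd_zero k)),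
    if_neg (by rintro rfl; exact ht ⟨e, rfl⟩), sub_zero]

end CongrAux

namespace CongrAux

noncomputable def Fser (R : Type*) [CommRing R] {j : ℕ} (a : Fin j → ℕ) (M : ℕ) : PowerSeries R :=
  ∏ i : Fin j, ∏ m ∈ Finset.Icc 1 M, (1 - PowerSeries.X ^ (a i * m))

noncomputable def Gser (R : Type*) [CommRing R] {j : ℕ} (a : Fin j → ℕ) (δ M : ℕ) : PowerSeries R :=
  ∏ i : Fin j, (PowerSeries.X ^ (a i) *
    ∏ m ∈ Finset.Icc 1 M, (1 - PowerSeries.X ^ (a i * m)) ^ 24) ^ δ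

noncomputable def FLser (R : Type*) [CommRing R] {j : ℕ} (a : Fin j → ℕ) (k M : ℕ) : PowerSeries R :=
  ∏ i : Fin j, ∏ m ∈ Finset.Icc 1 M, (1 - PowerSeries.X ^ (a i * m * k))

lemma Fser_def (R : Type*) [CommRing R] {j : ℕ} (a : Fin j → ℕ) (M : ℕ) :
    Fser R a M = ∏ i : Fin j, ∏ m ∈ Finset.Icc 1 M, (1 - PowerSeries.X ^ (a i * m)) := rfl

lemma Gser_def (R : Type*) [CommRing R] {j : ℕ} (a : Fin j → ℕ) (δ M : ℕ) :
    Gser R a δ M = ∏ i : Fin j, (PowerSeries.X ^ (a i) *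
      ∏ m ∈ Finset.Icc 1 M, (1 - PowerSeries.X ^ (a i * m)) ^ 24) ^ δ := rfl

lemma Icc_one_split {G : Type*} [CommMonoid G] (f : ℕ → G) {n M : ℕ} (h : n ≤ M) :
    ∏ m ∈ Finset.Icc 1 M, f m = (∏ m ∈ Finset.Icc 1 n, f m) * ∏ m ∈ Finset.Ioc n M, f m := by
  have e1 : Finset.Icc 1 M = Finset.Ioc 0 M := by rw [← Finset.Icc_add_one_left_eq_Ioc, zero_add]
  have e2 : Finset.Icc 1 n = Finset.Ioc 0 n := by rw [← Finset.Icc_add_one_left_eq_Ioc, zero_add]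
  rw [e1, e2, Finset.prod_Ioc_consecutive f (Nat.zero_le n) h]

lemma Fser_split {R : Type*} [CommRing R] {j : ℕ} (a : Fin j → ℕ) {n M : ℕ} (h : n ≤ M) :
    Fser R a M = Fser R a n *
      ∏ i : Fin j, ∏ m ∈ Finset.Ioc n M, (1 - PowerSeries.X ^ (a i * m)) := by
  unfold Fser
  rw [← Finset.prod_mul_distrib]
  exact Finset.prod_congr rfl fun i _ => Icc_one_split _ h

lemma lowOne_tail {R : Type*} [CommRing R] {j : ℕ} {a : Fin j → ℕ} (ha : ∀ i, 0 < a i)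
    (n M : ℕ) :
    LowOne n (∏ i : Fin j, ∏ m ∈ Finset.Ioc n M, (1 - PowerSeries.X ^ (a i * m)) :
      PowerSeries R) :=
  lowOne_prod _ _ fun i _ => lowOne_prod _ _ fun m hm =>
    lowOne_one_sub_X_pow (lt_of_lt_of_le (Finset.mem_Ioc.mp hm).1
      (Nat.le_mul_of_pos_left m (ha i)))

lemma mulSupp_FLser {R : Type*} [CommRing R] {j : ℕ} (a : Fin j → ℕ) (k M : ℕ) :
    MulSupp k (FLser R a k M) :=
  mulSupp_prod _ _ fun i _ => mulSupp_prod _ _ fun m _ => by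
    intro t ht
    rw [map_sub, coeff_one, coeff_X_pow, if_neg (by rintro rfl; exact ht (dvd_zero k)),
      if_neg (by rintro rfl; exact ht ⟨a i * m, mul_comm _ _⟩), sub_zero]

lemma lowOne_zero_FLser {R : Type*} [CommRing R] {j : ℕ} (a : Fin j → ℕ)
    (ha : ∀ i, 0 < a i) {k : ℕ} (hk : 0 < k) (M : ℕ) :
    LowOne 0 (FLser R a k M) :=
  lowOne_prod _ _ fun i _ => lowOne_prod _ _ fun m hm =>
    lowOne_one_sub_X_pow (by
      have hm1 : 1 ≤ m := (Finset.mem_Icc.mp hm).1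
      have := Nat.mul_pos (Nat.mul_pos (ha i) hm1) hk
      omega)

lemma GF_key {R : Type*} [CommRing R] {p : ℕ} [Fact p.Prime]
    [CharP (PowerSeries R) p] {j : ℕ} (a : Fin j → ℕ) (δ M : ℕ)
    (h24 : 24 * δ + 1 = p ^ 2) :
    Gser R a δ M * Fser R a M
      = PowerSeries.X ^ (∑ i : Fin j, a i * δ) * FLser R a (p ^ 2) M := by
  unfold Gser Fser FLser
  rw [← Finset.prod_mul_distrib]
  have step : ∀ i : Fin j,
      ((PowerSeries.X ^ (a i) *
          ∏ m ∈ Finset.Icc 1 M, (1 - PowerSeries.X ^ (a i * m)) ^ 24) ^ δ *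
        ∏ m ∈ Finset.Icc 1 M, (1 - PowerSeries.X ^ (a i * m)) : PowerSeries R)
      = PowerSeries.X ^ (a i * δ) *
          ∏ m ∈ Finset.Icc 1 M, (1 - PowerSeries.X ^ (a i * m * p ^ 2)) := by
    intro i
    rw [mul_pow, ← pow_mul, ← Finset.prod_pow, mul_assoc, ← Finset.prod_mul_distrib]
    congr 1
    apply Finset.prod_congr rfl
    intro m _
    rw [← pow_mul, ← pow_succ, h24, sub_pow_char_pow, one_pow, ← pow_mul]
  have hstep : (∏ i : Fin j,
      ((PowerSeries.X ^ (a i) *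
          ∏ m ∈ Finset.Icc 1 M, (1 - PowerSeries.X ^ (a i * m)) ^ 24) ^ δ *
        ∏ m ∈ Finset.Icc 1 M, (1 - PowerSeries.X ^ (a i * m)) : PowerSeries R))
      = ∏ i : Fin j, (PowerSeries.X ^ (a i * δ) *
          ∏ m ∈ Finset.Icc 1 M, (1 - PowerSeries.X ^ (a i * m * p ^ 2))) :=
    Finset.prod_congr rfl fun i _ => step i
  rw [hstep, Finset.prod_mul_distrib, Finset.prod_pow_eq_pow_sum]

end CongrAux

open PowerSeries Finset CongrAux

/-- Let `a₁, …, a_j` be positive integers, `c(n)` defined by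
`∑ c(n) qⁿ = ∏_{n≥1} ∏_{i=1}^j 1/(1 - q^{aᵢ n})` in `ℤ[[q]]`, `N = lcm(a₁, …, a_j)`,
`ℓ > max(5, j+3)` a prime with `ℓ ∤ N`, `a, b ∈ {0, …, ℓ-1}` with
`24a ≡ 24b + (a₁ + ⋯ + a_j) (mod ℓ)`, and `d(n)` defined by
`∑ d(n) qⁿ = ∏_{i=1}^j (q^{aᵢ} ∏_{n≥1} (1 - q^{aᵢ n})^24)^{(ℓ²-1)/24}`
(characterized coefficientwise via truncated products). Then
`c(ℓn + a) ≡ 0 (mod ℓ)` for all `n ≥ 0` iff `d(ℓn + b) ≡ 0 (mod ℓ)` for all `n ≥ 0`. -/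
theorem congruence_transfer_to_delta_power
    (j : ℕ) (hj : 0 < j) (a : Fin j → ℕ) (ha : ∀ i, 0 < a i)
    (c : ℕ → ℤ)
    (hc : ∀ n : ℕ, PowerSeries.coeff (R := ℤ) n ((PowerSeries.mk c) *
        ∏ i : Fin j, ∏ m ∈ Finset.Icc 1 n, (1 - PowerSeries.X ^ (a i * m))) =
      if n = 0 then 1 else 0)
    (N : ℕ) (hN : N = Finset.univ.lcm a)
    (ℓ : ℕ) (hℓ : ℓ.Prime) (hℓbig : max 5 (j + 3) < ℓ) (hℓN : ¬ ℓ ∣ N)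
    (a₀ b : ℕ) (ha₀ : a₀ ≤ ℓ - 1) (hb : b ≤ ℓ - 1)
    (hab : (ℓ : ℤ) ∣ (24 * (a₀ : ℤ) - (24 * (b : ℤ) + ∑ i : Fin j, (a i : ℤ))))
    (d : ℕ → ℤ)
    (hd : ∀ n : ℕ, d n = PowerSeries.coeff (R := ℤ) n (∏ i : Fin j,
      (PowerSeries.X ^ (a i) *
        ∏ m ∈ Finset.Icc 1 n, (1 - PowerSeries.X ^ (a i * m)) ^ 24) ^ ((ℓ ^ 2 - 1) / 24))) :
    (∀ n : ℕ, (ℓ : ℤ) ∣ c (ℓ * n + a₀)) ↔ (∀ n : ℕ, (ℓ : ℤ) ∣ d (ℓ * n + b)) := by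
  have h5 : 5 < ℓ := lt_of_le_of_lt (le_max_left _ _) hℓbig
  have hl24 : ¬ ℓ ∣ 24 := by
    intro hdl
    have h2 : ℓ ∣ 2 ^ 3 * 3 := by norm_num at hdl ⊢; exact hdl
    rcases (Nat.Prime.dvd_mul hℓ).mp h2 with h | h
    · have := Nat.le_of_dvd (by norm_num) (hℓ.dvd_of_dvd_pow h); omega
    · have := Nat.le_of_dvd (by norm_num) h; omega
  have h2ℓ : ℓ % 2 = 1 := Nat.odd_iff.mp (hℓ.odd_of_ne_two (by omega))
  have h3ℓ : ¬ ℓ % 3 = 0 := by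
    intro h3
    have : (3 : ℕ) ∣ ℓ := Nat.dvd_of_mod_eq_zero h3
    have := (Nat.prime_dvd_prime_iff_eq Nat.prime_three hℓ).mp this
    omega
  have hmod : ℓ ^ 2 % 24 = 1 := by
    have hr : ∀ r < 24, r % 2 = 1 → ¬ r % 3 = 0 → r ^ 2 % 24 = 1 := by decide
    rw [Nat.pow_mod]
    apply hr _ (Nat.mod_lt _ (by norm_num))
    · rw [Nat.mod_mod_of_dvd _ (by norm_num : (2:ℕ) ∣ 24)]; exact h2ℓ
    · rw [Nat.mod_mod_of_dvd _ (by norm_num : (3:ℕ) ∣ 24)]; exact h3ℓ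
  have h24 : 24 * ((ℓ ^ 2 - 1) / 24) + 1 = ℓ ^ 2 := by
    have h1 : 1 ≤ ℓ ^ 2 := Nat.one_le_pow _ _ hℓ.pos
    omega
  haveI : Fact ℓ.Prime := ⟨hℓ⟩
  haveI : CharP (PowerSeries (ZMod ℓ)) ℓ :=
    charP_of_injective_ringHom (PowerSeries.C_injective (R := ZMod ℓ)) ℓ
  set δ := (ℓ ^ 2 - 1) / 24 with hδdef
  set s := ∑ i : Fin j, a i with hsdef
  set C : PowerSeries (ZMod ℓ) :=
    PowerSeries.map (Int.castRingHom (ZMod ℓ)) (PowerSeries.mk c) with hCdef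
  have hCcoeff : ∀ q : ℕ, PowerSeries.coeff (R := ZMod ℓ) q C = ((c q : ℤ) : ZMod ℓ) := by
    intro q; rw [hCdef, PowerSeries.coeff_map, PowerSeries.coeff_mk]; rfl
  -- coefficients of C * Fser are those of 1, in low degrees
  have hCF : ∀ M t : ℕ, t ≤ M →
      PowerSeries.coeff (R := ZMod ℓ) t (C * Fser (ZMod ℓ) a M) = if t = 0 then 1 else 0 := by
    intro M t htM
    have base : PowerSeries.coeff (R := ZMod ℓ) t (C * Fser (ZMod ℓ) a t)
        = if t = 0 then 1 else 0 := by
      have h := congrArg (Int.castRingHom (ZMod ℓ)) (hc t)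
      rw [← PowerSeries.coeff_map] at h
      simp only [map_mul, map_prod, map_sub, map_one, map_pow, PowerSeries.map_X] at h
      rw [apply_ite (Int.castRingHom (ZMod ℓ)), map_one, map_zero] at h
      rw [hCdef, Fser_def]
      exact h
    rw [Fser_split a htM, ← mul_assoc, coeff_mul_lowOne (lowOne_tail ha t M), base]
  have hDcoeff : ∀ n : ℕ, ((d n : ℤ) : ZMod ℓ)
      = PowerSeries.coeff (R := ZMod ℓ) n (Gser (ZMod ℓ) a δ n) := by
    intro n
    have h := congrArg (Int.castRingHom (ZMod ℓ)) (hd n)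
    rw [← PowerSeries.coeff_map] at h
    simp only [map_prod, map_mul, map_pow, map_sub, map_one, PowerSeries.map_X] at h
    rw [Gser_def]
    exact h
  -- the key convolution identity mod ℓ
  have hKEY : ∀ n : ℕ, ((d n : ℤ) : ZMod ℓ) =
      if δ * s ≤ n then
        ∑ pq ∈ Finset.HasAntidiagonal.antidiagonal (n - δ * s),
          PowerSeries.coeff (R := ZMod ℓ) pq.1 (FLser (ZMod ℓ) a (ℓ ^ 2) n) *
            ((c pq.2 : ℤ) : ZMod ℓ)
      else 0 := by
    intro n
    have e1 : LowOne n (C * Fser (ZMod ℓ) a n) := fun t ht => hCF n t ht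
    have e2 : PowerSeries.coeff (R := ZMod ℓ) n (Gser (ZMod ℓ) a δ n)
        = PowerSeries.coeff (R := ZMod ℓ) n
            (Gser (ZMod ℓ) a δ n * (C * Fser (ZMod ℓ) a n)) :=
      (coeff_mul_lowOne e1 _).symm
    have hE : (∑ i : Fin j, a i * δ) = δ * s := by
      rw [← Finset.sum_mul, hsdef, Nat.mul_comm]
    have e3 : Gser (ZMod ℓ) a δ n * (C * Fser (ZMod ℓ) a n)
        = PowerSeries.X ^ (δ * s) * (FLser (ZMod ℓ) a (ℓ ^ 2) n * C) := by
      have hcomm : Gser (ZMod ℓ) a δ n * (C * Fser (ZMod ℓ) a n)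
          = Gser (ZMod ℓ) a δ n * Fser (ZMod ℓ) a n * C := by ring
      rw [hcomm, GF_key (p := ℓ) a δ n h24, hE, mul_assoc]
    rw [hDcoeff n, e2, e3, PowerSeries.coeff_X_pow_mul']
    split_ifs with h
    · rw [PowerSeries.coeff_mul]
      apply Finset.sum_congr rfl
      rintro ⟨p, q⟩ _
      rw [hCcoeff q]
    · rfl
  -- casting facts
  have h24ne : ((24 : ℕ) : ZMod ℓ) ≠ 0 := by
    rw [Ne, ZMod.natCast_eq_zero_iff]; exact hl24
  have hδcast : (24 : ZMod ℓ) * ((δ : ℕ) : ZMod ℓ) = -1 := by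
    have h0 : ((24 * δ + 1 : ℕ) : ZMod ℓ) = ((ℓ ^ 2 : ℕ) : ZMod ℓ) := by rw [h24]
    push_cast at h0
    rw [ZMod.natCast_self] at h0
    linear_combination h0
  have hscast : ((s : ℕ) : ZMod ℓ) = ∑ i : Fin j, ((a i : ℕ) : ZMod ℓ) := by
    rw [hsdef]; push_cast; rfl
  have hba : ((a₀ : ℕ) : ZMod ℓ) + ((δ : ℕ) : ZMod ℓ) * ((s : ℕ) : ZMod ℓ)
      = ((b : ℕ) : ZMod ℓ) := by
    have habz : ((24 * (a₀:ℤ) - (24 * (b:ℤ) + ∑ i : Fin j, (a i : ℤ)) : ℤ) : ZMod ℓ) = 0 :=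
      (ZMod.intCast_zmod_eq_zero_iff_dvd _ ℓ).mpr hab
    push_cast at habz
    have h24ne' : (24 : ZMod ℓ) ≠ 0 := by
      intro h; apply h24ne; rw [← h]; norm_num
    apply mul_left_cancel₀ h24ne'
    linear_combination habz + ((s : ℕ) : ZMod ℓ) * hδcast - hscast
  have hconv : ∀ (e t : ℕ), e ≤ ℓ - 1 → ((t : ℕ) : ZMod ℓ) = ((e : ℕ) : ZMod ℓ) →
      t = ℓ * (t / ℓ) + e := by
    intro e t he hcast
    have h2 : t % ℓ = e % ℓ := (ZMod.natCast_eq_natCast_iff' t e ℓ).mp hcast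
    have h3 : e % ℓ = e := Nat.mod_eq_of_lt (by omega)
    have h4 := Nat.div_add_mod t ℓ
    rw [h2, h3] at h4
    omega
  have hcast_lin : ∀ (n e : ℕ), (((ℓ * n + e : ℕ) : ZMod ℓ)) = ((e : ℕ) : ZMod ℓ) := by
    intro n e; push_cast; rw [ZMod.natCast_self]; ring
  constructor
  · -- forward
    intro hcz n
    rw [← ZMod.intCast_zmod_eq_zero_iff_dvd]
    rw [hKEY (ℓ * n + b)]
    split_ifs with hle
    · apply Finset.sum_eq_zero
      rintro ⟨p, q⟩ hpq
      have hm : p + q = ℓ * n + b - δ * s := Finset.HasAntidiagonal.mem_antidiagonal.mp hpq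
      by_cases hp : ℓ ^ 2 ∣ p
      · have hpz : ((p : ℕ) : ZMod ℓ) = 0 :=
          (ZMod.natCast_eq_zero_iff _ _).mpr
            (dvd_trans (dvd_pow_self ℓ two_ne_zero) hp)
        have hqa : ((q : ℕ) : ZMod ℓ) = ((a₀ : ℕ) : ZMod ℓ) := by
          have hsum : p + q + δ * s = ℓ * n + b := by omega
          have hcm := congrArg (fun x : ℕ => ((x : ℕ) : ZMod ℓ)) hsum
          push_cast at hcm
          rw [ZMod.natCast_self] at hcm
          linear_combination hcm - hba - hpz
        have hq' : q = ℓ * (q / ℓ) + a₀ := hconv a₀ q ha₀ hqa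
        have hz := hcz (q / ℓ)
        rw [← hq'] at hz
        rw [(ZMod.intCast_zmod_eq_zero_iff_dvd _ _).mpr hz, mul_zero]
      · rw [mulSupp_FLser a (ℓ ^ 2) (ℓ * n + b) p hp, zero_mul]
    · rfl
  · -- backward
    intro hdz
    have hd0 : ∀ t : ℕ, ((t : ℕ) : ZMod ℓ) = ((b : ℕ) : ZMod ℓ) →
        ((d t : ℤ) : ZMod ℓ) = 0 := by
      intro t hcast
      have h1 : t = ℓ * (t / ℓ) + b := hconv b t hb hcast
      have h2 := hdz (t / ℓ)
      rw [← h1] at h2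
      exact (ZMod.intCast_zmod_eq_zero_iff_dvd _ _).mpr h2
    have hc0 : ∀ q : ℕ, ((q : ℕ) : ZMod ℓ) = ((a₀ : ℕ) : ZMod ℓ) →
        ((c q : ℤ) : ZMod ℓ) = 0 := by
      intro q
      induction q using Nat.strong_induction_on with
      | _ q ih =>
        intro hq
        have ht : (((q + δ * s : ℕ) : ℕ) : ZMod ℓ) = ((b : ℕ) : ZMod ℓ) := by
          push_cast
          linear_combination hq + hba
        have hdt := hd0 (q + δ * s) ht
        have hiff := hKEY (q + δ * s)
        rw [if_pos (Nat.le_add_left _ _), Nat.add_sub_cancel] at hiff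
        have hsum : ∑ pq ∈ Finset.HasAntidiagonal.antidiagonal q,
            PowerSeries.coeff (R := ZMod ℓ) pq.1 (FLser (ZMod ℓ) a (ℓ ^ 2) (q + δ * s)) *
              ((c pq.2 : ℤ) : ZMod ℓ) = ((c q : ℤ) : ZMod ℓ) := by
          rw [Finset.sum_eq_single_of_mem (0, q)
              (Finset.HasAntidiagonal.mem_antidiagonal.mpr (zero_add q))]
          · have h1 : PowerSeries.coeff (R := ZMod ℓ) 0 (FLser (ZMod ℓ) a (ℓ ^ 2) (q + δ * s))
                = 1 := by
              have := lowOne_zero_FLser (R := ZMod ℓ) a ha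
                (show 0 < ℓ ^ 2 from Nat.pow_pos (n := 2) hℓ.pos) (q + δ * s) 0 le_rfl
              simpa using this
            rw [h1, one_mul]
          · rintro ⟨p, q'⟩ hpq hne
            have hm : p + q' = q := Finset.HasAntidiagonal.mem_antidiagonal.mp hpq
            have hp0 : p ≠ 0 := by
              rintro rfl
              exact hne (by rw [Prod.mk.injEq]; exact ⟨rfl, by omega⟩)
            by_cases hp : ℓ ^ 2 ∣ p
            · have hpz : ((p : ℕ) : ZMod ℓ) = 0 :=
                (ZMod.natCast_eq_zero_iff _ _).mpr
                  (dvd_trans (dvd_pow_self ℓ two_ne_zero) hp)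
              have hq'cast : ((q' : ℕ) : ZMod ℓ) = ((a₀ : ℕ) : ZMod ℓ) := by
                have hcm := congrArg (fun x : ℕ => ((x : ℕ) : ZMod ℓ)) hm
                push_cast at hcm
                linear_combination hcm + hq - hpz
              have hlt : q' < q := by
                have : 0 < p := Nat.pos_of_ne_zero hp0
                omega
              rw [ih q' hlt hq'cast, mul_zero]
            · rw [mulSupp_FLser a (ℓ ^ 2) (q + δ * s) p hp, zero_mul]
        rw [hsum, hdt] at hiff
        exact hiff.symm
    intro n
    rw [← ZMod.intCast_zmod_eq_zero_iff_dvd]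
    exact hc0 (ℓ * n + a₀) (hcast_lin n a₀)
end
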